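/- arXiv:1506.06515 — 5 statements merged into one kernel-verified Lean document; each statement's English description precedes it below -/
import Mathlib

section
/- Let G = (V,E) be a graph and c₀ ∈ 𝒞(G) a circuit graph. Then there exists a linear combination c₀ = Σ_{c∈𝒞(G), c≠c₀} s(c)·c with coefficients s(c) ∈ ℝ if and only if every edge of c₀ is contained in some circuit graph c ∈ 𝒞(G) with c ≠ c₀. Moreover, in that case the coefficients s(c) can be chosen to be rational numbers. -/
open Filter Topology MeasureTheory

/-- A (directed) graph on a vertex set `V`: an edge relation `E ⊆ V × V`
whose two coordinate projections are surjective. -/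
structure DirGraph (V : Type) : Type where
  E : Set (V × V)
  surj_init : ∀ v : V, ∃ u : V, (v, u) ∈ E
  surj_term : ∀ v : V, ∃ u : V, (u, v) ∈ E

/-- A walk of length `l` in `G`. -/
def IsWalk {V : Type} (G : DirGraph V) (l : ℕ) (w : Fin (l + 1) → V) : Prop :=
  ∀ i : Fin l, (w i.castSucc, w i.succ) ∈ G.E

/-- The edge set of a walk. -/
def walkEdges {V : Type} {l : ℕ} (w : Fin (l + 1) → V) : Set (V × V) :=
  {e | ∃ i : Fin l, e = (w i.castSucc, w i.succ)}

/-- `c` is the edge set of a circuit of `G`: a closed walk whose vertices are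
pairwise distinct except that the initial and terminal vertices coincide. -/
def IsCircuitIn {V : Type} (G : DirGraph V) (c : Set (V × V)) : Prop :=
  ∃ l : ℕ, 0 < l ∧ ∃ w : Fin (l + 1) → V,
    IsWalk G l w ∧ w (Fin.last l) = w 0 ∧
    (∀ i j : Fin (l + 1), i < j → w i = w j → i = 0 ∧ j = Fin.last l) ∧
    c = walkEdges w

/-- The set `𝒞(G)` of circuit graphs of `G` (a circuit graph is identified
with its edge set). -/
def circuitsOf {V : Type} (G : DirGraph V) : Set (Set (V × V)) :=
  {c | IsCircuitIn G c}

/-- The vertex set of a circuit graph (given by its edge set). -/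
def circVerts {V : Type} (c : Set (V × V)) : Set V :=
  {v | ∃ e ∈ c, v = e.1 ∨ v = e.2}

/-- The element `Σ_{e ∈ E(c)} e` of the vector space with basis the edges,
associated with a circuit graph `c`. -/
noncomputable def circVec {V : Type} (c : Set (V × V)) : V × V → ℝ :=
  c.indicator fun _ => 1

/-- `c̃ = (1/Per(c))·c` where `Per(c)` is the number of edges of `c`. -/
noncomputable def circTilde {V : Type} (c : Set (V × V)) : V × V → ℝ :=
  fun e => ((Set.ncard c : ℝ))⁻¹ * circVec c e

/-- Membership in `ℳ(G)`: nonnegative coefficients supported on the edges. -/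
def MemM {V : Type} [Fintype V] (G : DirGraph V) (a : V × V → ℝ) : Prop :=
  (∀ e, 0 ≤ a e) ∧ ∀ e, e ∉ G.E → a e = 0

/-- Membership in `ℐ(G)`: at every vertex the incoming coefficient sum equals
the outgoing coefficient sum. -/
def MemI {V : Type} [Fintype V] (G : DirGraph V) (a : V × V → ℝ) : Prop :=
  MemM G a ∧ ∀ v : V, (∑ u : V, a (u, v)) = ∑ u : V, a (v, u)

/-- Membership in `𝒫(G)`: elements of `ℐ(G)` of total mass `1`. -/
def MemP {V : Type} [Fintype V] (G : DirGraph V) (a : V × V → ℝ) : Prop :=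
  MemI G a ∧ (∑ e : V × V, a e) = 1

/-- The action of a map on edges. -/
def edgeMap {V₁ V₂ : Type} (ψ : V₁ → V₂) (e : V₁ × V₁) : V₂ × V₂ := (ψ e.1, ψ e.2)

/-- `ψ : G₁ → G₂` is a cover: an edge-surjective, positive-directional
graph homomorphism. -/
structure IsCover {V₁ V₂ : Type} (G₁ : DirGraph V₁) (G₂ : DirGraph V₂) (ψ : V₁ → V₂) : Prop where
  hom : ∀ u v : V₁, (u, v) ∈ G₁.E → (ψ u, ψ v) ∈ G₂.E
  edgeSurj : ∀ e ∈ G₂.E, ∃ u v : V₁, (u, v) ∈ G₁.E ∧ (ψ u, ψ v) = e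
  posDir : ∀ u v v' : V₁, (u, v) ∈ G₁.E → (u, v') ∈ G₁.E → ψ v = ψ v'

/-- The induced linear map `ψ_*` on edge vectors: the coefficient of an edge `e`
of the target is the sum of the coefficients of its preimages. -/
noncomputable def pushVec {V₁ V₂ : Type} (ψ : V₁ → V₂) (a : V₁ × V₁ → ℝ) : V₂ × V₂ → ℝ :=
  fun e => ∑ᶠ e' ∈ {e' : V₁ × V₁ | edgeMap ψ e' = e}, a e'

/-- Euclidean distance on finite-dimensional coordinate spaces. -/
noncomputable def dE {ι : Type} [Fintype ι] (a b : ι → ℝ) : ℝ :=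
  Real.sqrt (∑ i : ι, (a i - b i) ^ 2)

/-- A sequence of covers `G₀ ← G₁ ← G₂ ← ⋯` of finite graphs, with `G₀`
the one-vertex graph (with a single loop). -/
structure CoverSystem : Type 1 where
  V : ℕ → Type
  fintypeV : ∀ n, Fintype (V n)
  G : ∀ n, DirGraph (V n)
  φ : ∀ n, V (n + 1) → V n
  cover : ∀ n, IsCover (G (n + 1)) (G n) (φ n)
  V0_single : ∀ x y : V 0, x = y

namespace CoverSystem

instance (S : CoverSystem) (n : ℕ) : Fintype (S.V n) := S.fintypeV n
instance (S : CoverSystem) (n : ℕ) : TopologicalSpace (S.V n) := ⊥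
instance (S : CoverSystem) (n : ℕ) : DiscreteTopology (S.V n) := ⟨rfl⟩

/-- `φ_{n+k, n}` as a composition of the covering maps. -/
def phiIter (S : CoverSystem) (n : ℕ) : ∀ k : ℕ, S.V (n + k) → S.V n
  | 0 => fun v => v
  | k + 1 => fun v => S.phiIter n k (S.φ (n + k) v)

/-- `φ_{m,n} : V m → V n` for `n ≤ m`. -/
def phiLE (S : CoverSystem) {m n : ℕ} (h : n ≤ m) (v : S.V m) : S.V n :=
  S.phiIter n (m - n) (cast (congrArg S.V (Nat.add_sub_cancel' h).symm) v)

/-- The inverse limit space `X` of the sequence of covers. -/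
def X (S : CoverSystem) : Type :=
  { x : ∀ n, S.V n // ∀ n, S.φ n (x (n + 1)) = x n }

instance (S : CoverSystem) : TopologicalSpace S.X :=
  inferInstanceAs (TopologicalSpace { x : ∀ n, S.V n // ∀ n, S.φ n (x (n + 1)) = x n })

instance (S : CoverSystem) : MeasurableSpace S.X := borel S.X
instance (S : CoverSystem) : BorelSpace S.X := ⟨rfl⟩

/-- The projection `φ_{∞,n} : X → V n`. -/
def proj (S : CoverSystem) (x : S.X) (n : ℕ) : S.V n := Subtype.val x n

/-- `f` is the shift map of the inverse limit: it is compatible with all the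
edge relations (this determines `f` uniquely). -/
def IsLimitMap (S : CoverSystem) (f : S.X → S.X) : Prop :=
  ∀ (x : S.X) (n : ℕ), (S.proj x n, S.proj (f x) n) ∈ (S.G n).E

/-- `U(v) = φ_{∞,n}⁻¹(v)`. -/
def USet (S : CoverSystem) {n : ℕ} (v : S.V n) : Set S.X := {x | S.proj x n = v}

/-- `U(e) = U(u) ∩ f⁻¹(U(v))` for an edge `e = (u,v)`. -/
def UEdge (S : CoverSystem) (f : S.X → S.X) {n : ℕ} (e : S.V n × S.V n) : Set S.X :=
  {x | S.proj x n = e.1 ∧ S.proj (f x) n = e.2}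

/-- `μ` is an `f`-invariant Borel measure. -/
def Invariant (S : CoverSystem) (f : S.X → S.X) (μ : Measure S.X) : Prop :=
  ∀ B : Set S.X, MeasurableSet B → μ (f ⁻¹' B) = μ B

/-- `μ` is ergodic: every invariant Borel set is null or conull. -/
def ErgodicM (S : CoverSystem) (f : S.X → S.X) (μ : Measure S.X) : Prop :=
  ∀ B : Set S.X, MeasurableSet B → f ⁻¹' B = B → μ B = 0 ∨ μ B = 1

/-- The vector `μ_n = Σ_{e ∈ E_n} μ(U(e))·e ∈ Δ_n` of a measure `μ`. -/
noncomputable def muVec (S : CoverSystem) (f : S.X → S.X) (μ : Measure S.X) (n : ℕ) :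
    S.V n × S.V n → ℝ :=
  fun e => (μ (S.UEdge f e)).toReal

/-- `Δ_∞`: compatible sequences of elements of the simplices `Δ_n = 𝒫(G_n)`. -/
def DeltaInf (S : CoverSystem) : Set (∀ n, S.V n × S.V n → ℝ) :=
  {x | (∀ n, MemP (S.G n) (x n)) ∧
    ∀ m n : ℕ, ∀ h : n ≤ m, pushVec (S.phiLE h) (x m) = x n}

/-- `C` is a system of circuits enumerated by `N'`. -/
def IsCircuitSystem (S : CoverSystem) (N' : Set ℕ)
    (C : ∀ n, Set (Set (S.V n × S.V n))) : Prop :=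
  ∀ n ∈ N', C n ⊆ circuitsOf (S.G n)

/-- The system of circuits `C` expresses the measure `μ`. -/
def Expresses (S : CoverSystem) (f : S.X → S.X) (μ : Measure S.X)
    (N' : Set ℕ) (C : ∀ n, Set (Set (S.V n × S.V n))) : Prop :=
  ∀ n ∈ N', ∃ s : Set (S.V n × S.V n) → ℝ,
    (∀ c ∈ C n, 0 ≤ s c) ∧ ∀ e, S.muVec f μ n e = ∑ᶠ c ∈ C n, s c * circTilde c e

/-- The system of circuits `C` expresses every ergodic invariant Borel
probability measure. -/
def ExpressesAllErgodic (S : CoverSystem) (f : S.X → S.X)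
    (N' : Set ℕ) (C : ∀ n, Set (Set (S.V n × S.V n))) : Prop :=
  ∀ μ : Measure S.X, IsProbabilityMeasure μ → S.Invariant f μ → S.ErgodicM f μ →
    S.Expresses f μ N' C

/-- `𝒞̄_∞`: the set of limit sequences of sequences of circuits chosen from `C`. -/
def limitsOf (S : CoverSystem) (N' : Set ℕ)
    (C : ∀ n, Set (Set (S.V n × S.V n))) : Set (∀ m, S.V m × S.V m → ℝ) :=
  {y | ∃ c : ∀ n, Set (S.V n × S.V n), (∀ n ∈ N', c n ∈ C n) ∧
    ∀ m : ℕ, Filter.Tendsto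
      (fun n : ℕ => if h : m ≤ n then dE (pushVec (S.phiLE h) (circTilde (c n))) (y m) else 1)
      (Filter.atTop ⊓ Filter.principal N') (nhds 0)}

end CoverSystem

open Classical in
noncomputable def chi {V : Type} (c : Set (V × V)) (e : V × V) : ℕ :=
  if e ∈ c then 1 else 0

lemma circVec_eq_chi {V : Type} (c : Set (V × V)) (e : V × V) :
    circVec c e = (chi c e : ℝ) := by
  classical
  by_cases h : e ∈ c <;> simp [circVec, chi, h]

lemma circuit_props {V : Type} [Fintype V] {G : DirGraph V} {c : Set (V × V)}
    (hc : IsCircuitIn G c) :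
    c.Finite ∧ c.Nonempty ∧ c ⊆ G.E ∧
      ∀ v : V, (∑ u : V, chi c (u, v)) = ∑ u : V, chi c (v, u) := by
  classical
  obtain ⟨l, hl, w, hwalk, hclose, hinj, rfl⟩ := hc
  have hrange : walkEdges w = Set.range (fun i : Fin l => (w i.castSucc, w i.succ)) := by
    ext e; simp [walkEdges, Set.range, eq_comm]
  have hfin : (walkEdges w).Finite := by rw [hrange]; exact Set.finite_range _
  have hne : (walkEdges w).Nonempty := ⟨_, ⟨⟨0, hl⟩, rfl⟩⟩
  have hsub : walkEdges w ⊆ G.E := by rintro e ⟨i, rfl⟩; exact hwalk i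
  refine ⟨hfin, hne, hsub, fun v => ?_⟩
  have head_inj : ∀ i j : Fin l, w i.succ = w j.succ → i = j := by
    intro i j h
    rcases lt_trichotomy i j with hij | hij | hij
    · exact absurd (hinj i.succ j.succ (by simpa using hij) h).1 (Fin.succ_ne_zero i)
    · exact hij
    · exact absurd (hinj j.succ i.succ (by simpa using hij) h.symm).1 (Fin.succ_ne_zero j)
  have tail_inj : ∀ i j : Fin l, w i.castSucc = w j.castSucc → i = j := by
    intro i j h
    rcases lt_trichotomy i j with hij | hij | hij
    · exact absurd (hinj i.castSucc j.castSucc (by simpa using hij) h).2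
        (Fin.castSucc_lt_last j).ne
    · exact hij
    · exact absurd (hinj j.castSucc i.castSucc (by simpa using hij) h.symm).2
        (Fin.castSucc_lt_last i).ne
  have hin : (∑ u : V, chi (walkEdges w) (u, v)) =
      if ∃ i : Fin l, w i.succ = v then 1 else 0 := by
    by_cases h : ∃ i : Fin l, w i.succ = v
    · obtain ⟨i, hi⟩ := id h
      have key : ∀ u : V, chi (walkEdges w) (u, v) = if u = w i.castSucc then 1 else 0 := by
        intro u
        unfold chi
        by_cases hu : (u, v) ∈ walkEdges w
        · obtain ⟨j, hj⟩ := id hu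
          have h1 : u = w j.castSucc := congrArg Prod.fst hj
          have h2 : w j.succ = v := (congrArg Prod.snd hj).symm
          have hji : j = i := head_inj j i (h2.trans hi.symm)
          subst hji
          rw [if_pos hu, if_pos h1]
        · have hne2 : u ≠ w i.castSucc := by
            rintro rfl; exact hu ⟨i, by rw [hi]⟩
          simp [hu, hne2]
      calc (∑ u : V, chi (walkEdges w) (u, v))
          = ∑ u : V, (if u = w i.castSucc then 1 else 0) :=
            Finset.sum_congr rfl (fun u _ => key u)
        _ = 1 := by simp
        _ = if ∃ i : Fin l, w i.succ = v then 1 else 0 := by rw [if_pos h]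
    · have key : ∀ u : V, chi (walkEdges w) (u, v) = 0 := by
        intro u; unfold chi
        have hnm : (u, v) ∉ walkEdges w := by
          rintro ⟨j, hj⟩; exact h ⟨j, (congrArg Prod.snd hj).symm⟩
        simp [hnm]
      simp [key, h]
  have hout : (∑ u : V, chi (walkEdges w) (v, u)) =
      if ∃ i : Fin l, w i.castSucc = v then 1 else 0 := by
    by_cases h : ∃ i : Fin l, w i.castSucc = v
    · obtain ⟨i, hi⟩ := id h
      have key : ∀ u : V, chi (walkEdges w) (v, u) = if u = w i.succ then 1 else 0 := by
        intro u
        unfold chi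
        by_cases hu : (v, u) ∈ walkEdges w
        · obtain ⟨j, hj⟩ := id hu
          have h1 : w j.castSucc = v := (congrArg Prod.fst hj).symm
          have h2 : u = w j.succ := congrArg Prod.snd hj
          have hji : j = i := tail_inj j i (h1.trans hi.symm)
          subst hji
          rw [if_pos hu, if_pos h2]
        · have hne2 : u ≠ w i.succ := by
            rintro rfl; exact hu ⟨i, by rw [hi]⟩
          simp [hu, hne2]
      calc (∑ u : V, chi (walkEdges w) (v, u))
          = ∑ u : V, (if u = w i.succ then 1 else 0) :=
            Finset.sum_congr rfl (fun u _ => key u)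
        _ = 1 := by simp
        _ = if ∃ i : Fin l, w i.castSucc = v then 1 else 0 := by rw [if_pos h]
    · have key : ∀ u : V, chi (walkEdges w) (v, u) = 0 := by
        intro u; unfold chi
        have hnm : (v, u) ∉ walkEdges w := by
          rintro ⟨j, hj⟩; exact h ⟨j, (congrArg Prod.fst hj).symm⟩
        simp [hnm]
      simp [key, h]
  rw [hin, hout]
  refine if_congr ⟨?_, ?_⟩ rfl rfl
  · rintro ⟨i, rfl⟩
    by_cases hlast : i.succ = Fin.last l
    · refine ⟨⟨0, hl⟩, ?_⟩
      have h0 : (⟨0, hl⟩ : Fin l).castSucc = (0 : Fin (l + 1)) := by ext; simp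
      rw [h0, ← hclose, hlast]
    · have hne2 : (i.succ : ℕ) ≠ l := fun hh => hlast (by ext; simpa using hh)
      have hlt : (i.succ : ℕ) < l := by have := i.succ.isLt; omega
      refine ⟨⟨(i.succ : ℕ), hlt⟩, ?_⟩
      have hcs : (⟨(i.succ : ℕ), hlt⟩ : Fin l).castSucc = i.succ := by ext; simp
      rw [hcs]
  · rintro ⟨i, rfl⟩
    by_cases h0 : i.castSucc = 0
    · refine ⟨⟨l - 1, by omega⟩, ?_⟩
      have h1 : (⟨l - 1, by omega⟩ : Fin l).succ = Fin.last l := by ext; simp; omega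
      rw [h1, hclose, h0]
    · have hpos : 0 < (i : ℕ) := by
        rcases Nat.eq_zero_or_pos (i : ℕ) with h | h
        · exact absurd (Fin.ext (by simp [h]) : i.castSucc = 0) h0
        · exact h
      refine ⟨⟨(i : ℕ) - 1, by omega⟩, ?_⟩
      have h1 : (⟨(i : ℕ) - 1, by omega⟩ : Fin l).succ = i.castSucc := by ext; simp; omega
      rw [h1]

lemma exists_circuit_support {V : Type} [Fintype V] {G : DirGraph V} (g : V × V → ℕ)
    (hsupp : ∀ e, g e ≠ 0 → e ∈ G.E)
    (hbal : ∀ v : V, (∑ u : V, g (u, v)) = ∑ u : V, g (v, u))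
    {e₀ : V × V} (he₀ : g e₀ ≠ 0) :
    ∃ c, IsCircuitIn G c ∧ ∀ e ∈ c, g e ≠ 0 := by
  classical
  set P : V → Prop := fun v => 0 < ∑ u : V, g (v, u) with hP
  have hstep : ∀ p : {v // P v}, ∃ q : {v // P v}, 0 < g (p.1, q.1) := by
    rintro ⟨v, hv⟩
    obtain ⟨u, _, hu⟩ := Finset.exists_ne_zero_of_sum_ne_zero hv.ne'
    have hPu : P u := by
      have h1 : g (v, u) ≤ ∑ x : V, g (x, u) :=
        Finset.single_le_sum (f := fun x => g (x, u)) (fun x _ => Nat.zero_le _) (Finset.mem_univ v)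
      have := hbal u
      simp only [hP]
      omega
    exact ⟨⟨u, hPu⟩, Nat.pos_of_ne_zero hu⟩
  obtain ⟨FF, hFF⟩ := Classical.axiomOfChoice hstep
  have hP0 : P e₀.1 := by
    have h1 : g (e₀.1, e₀.2) ≤ ∑ u : V, g (e₀.1, u) :=
      Finset.single_le_sum (f := fun x => g (e₀.1, x)) (fun x _ => Nat.zero_le _) (Finset.mem_univ e₀.2)
    have h2 : g (e₀.1, e₀.2) ≠ 0 := by rwa [Prod.mk.eta]
    simp only [hP]; omega
  set vseq : ℕ → V := fun n => (FF^[n] ⟨e₀.1, hP0⟩).1 with hvseq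
  have hv : ∀ n : ℕ, 0 < g (vseq n, vseq (n + 1)) := by
    intro n
    have : FF^[n + 1] ⟨e₀.1, hP0⟩ = FF (FF^[n] ⟨e₀.1, hP0⟩) := Function.iterate_succ_apply' _ _ _
    simp only [hvseq, this]
    exact hFF _
  have hninj : ¬ Function.Injective (fun k : Fin (Fintype.card V + 1) => vseq k) := by
    intro h
    have := Fintype.card_le_of_injective _ h
    simp at this
  rw [Function.not_injective_iff] at hninj
  obtain ⟨a, b, hab, hne⟩ := hninj
  have hex : ∃ j : ℕ, ∃ i : ℕ, i < j ∧ vseq i = vseq j := by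
    rcases hne.lt_or_gt with h | h
    · exact ⟨b, a, by exact_mod_cast h, hab⟩
    · exact ⟨a, b, by exact_mod_cast h, hab.symm⟩
  set j₀ := Nat.find hex with hj₀
  obtain ⟨i, hij, heq⟩ := Nat.find_spec hex
  have hmin : ∀ a b : ℕ, a < b → b < j₀ → vseq a ≠ vseq b := by
    intro a b h1 h2 h3
    exact Nat.find_min hex h2 ⟨a, h1, h3⟩
  set l := j₀ - i with hldef
  have hl : 0 < l := by omega
  set w : Fin (l + 1) → V := fun k => vseq (i + k.val) with hw
  have hedge : ∀ k : Fin l, (w k.castSucc, w k.succ) = (vseq (i + k.val), vseq (i + k.val + 1)) := by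
    intro k
    simp only [hw, Fin.coe_castSucc, Fin.val_succ]
    rw [← Nat.add_assoc]
  refine ⟨walkEdges w, ⟨l, hl, w, ?_, ?_, ?_, rfl⟩, ?_⟩
  · intro k
    rw [hedge k]
    exact hsupp _ (hv _).ne'
  · show vseq (i + l) = vseq (i + 0)
    rw [show i + l = j₀ from by omega, Nat.add_zero]
    exact heq.symm
  · intro a b hab hweq
    have hav : (a : ℕ) < (b : ℕ) := hab
    have hbv : (b : ℕ) ≤ l := by have := b.isLt; omega
    have hweq' : vseq (i + a.val) = vseq (i + b.val) := hweq
    by_cases hB : i + b.val < j₀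
    · exact absurd hweq' (hmin _ _ (by omega) hB)
    · have hBj : i + b.val = j₀ := by omega
      have hb : b = Fin.last l := by ext; simp [Fin.val_last]; omega
      have ha : a = 0 := by
        by_contra ha0
        have hapos : 0 < (a : ℕ) := by
          rcases Nat.eq_zero_or_pos (a : ℕ) with h | h
          · exact absurd (Fin.ext (by simp [h])) ha0
          · exact h
        have : vseq i = vseq (i + a.val) := by
          rw [hweq', hBj]; exact heq
        exact hmin i (i + a.val) (by omega) (by omega) this
      exact ⟨ha, hb⟩
  · rintro e ⟨k, rfl⟩
    rw [hedge k]
    exact (hv _).ne'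

lemma decomp {V : Type} [Fintype V] {G : DirGraph V} :
    ∀ (n : ℕ) (g : V × V → ℕ), (∑ e : V × V, g e) = n →
    (∀ e, g e ≠ 0 → e ∈ G.E) → (∀ v : V, (∑ u : V, g (u, v)) = ∑ u : V, g (v, u)) →
    ∃ L : Multiset (Set (V × V)), (∀ c ∈ L, IsCircuitIn G c) ∧
      ∀ e, g e = (L.map (fun c => chi c e)).sum := by
  intro n
  induction n using Nat.strong_induction_on with
  | _ n ih =>
    intro g hn hsupp hbal
    by_cases h0 : ∀ e, g e = 0
    · exact ⟨0, by simp, fun e => by simp [h0 e]⟩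
    · push_neg at h0
      obtain ⟨e₀, he₀⟩ := h0
      obtain ⟨c, hc, hcs⟩ := exists_circuit_support g hsupp hbal he₀
      obtain ⟨-, ⟨e₁, he₁⟩, hcE, hcbal⟩ := circuit_props hc
      classical
      set g' : V × V → ℕ := fun e => g e - chi c e with hg'
      have hle : ∀ e, chi c e ≤ g e := by
        intro e
        by_cases he : e ∈ c
        · have := hcs e he
          simp only [chi, if_pos he]
          omega
        · simp [chi, he]
      have hsum : ∀ e, g e = chi c e + g' e := by
        intro e; have := hle e; simp only [hg']; omega
      have hchipos : 1 ≤ ∑ e : V × V, chi c e := by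
        have h1 : chi c e₁ = 1 := by simp [chi, he₁]
        calc 1 = chi c e₁ := h1.symm
          _ ≤ ∑ e : V × V, chi c e :=
            Finset.single_le_sum (fun x _ => Nat.zero_le _) (Finset.mem_univ e₁)
      have htot : (∑ e : V × V, g e) = (∑ e : V × V, chi c e) + ∑ e : V × V, g' e := by
        rw [← Finset.sum_add_distrib]
        exact Finset.sum_congr rfl (fun e _ => hsum e)
      have hlt : (∑ e : V × V, g' e) < n := by omega
      have hsupp' : ∀ e, g' e ≠ 0 → e ∈ G.E := by
        intro e he
        apply hsupp
        simp only [hg'] at he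
        omega
      have hbal' : ∀ v : V, (∑ u : V, g' (u, v)) = ∑ u : V, g' (v, u) := by
        intro v
        have h1 : (∑ u : V, g (u, v)) = (∑ u : V, chi c (u, v)) + ∑ u : V, g' (u, v) := by
          rw [← Finset.sum_add_distrib]
          exact Finset.sum_congr rfl (fun u _ => hsum (u, v))
        have h2 : (∑ u : V, g (v, u)) = (∑ u : V, chi c (v, u)) + ∑ u : V, g' (v, u) := by
          rw [← Finset.sum_add_distrib]
          exact Finset.sum_congr rfl (fun u _ => hsum (v, u))
        have h3 := hbal v
        have h4 := hcbal v
        omega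
      obtain ⟨L, hL, hLe⟩ := ih _ hlt g' rfl hsupp' hbal'
      refine ⟨c ::ₘ L, ?_, ?_⟩
      · intro c' hc'
        rcases Multiset.mem_cons.1 hc' with h | h
        · exact h ▸ hc
        · exact hL c' h
      · intro e
        rw [hsum e, Multiset.map_cons, Multiset.sum_cons, hLe e]

lemma rational_comb {V : Type} [Fintype V] {G : DirGraph V} {c₀ : Set (V × V)}
    (hc₀ : c₀ ∈ circuitsOf G)
    (hshared : ∀ e ∈ c₀, ∃ c ∈ circuitsOf G, c ≠ c₀ ∧ e ∈ c) :
    ∃ s : Set (V × V) → ℚ, ∀ e : V × V,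
      circVec c₀ e = ∑ᶠ c ∈ circuitsOf G \ {c₀}, (s c : ℝ) * circVec c e := by
  classical
  obtain ⟨hfin₀, hne₀, hsubE₀, hbal₀⟩ := circuit_props hc₀
  choose! φ hφc hφne hφe using hshared
  set F : Finset (V × V) := hfin₀.toFinset with hFdef
  have hF : ∀ e, e ∈ F ↔ e ∈ c₀ := fun e => hfin₀.mem_toFinset
  set S : (V × V) → ℕ := fun e' => ∑ e ∈ F, chi (φ e) e' with hSdef
  have hle : ∀ e', chi c₀ e' ≤ S e' := by
    intro e'
    by_cases h : e' ∈ c₀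
    · have h1 : chi (φ e') e' = 1 := by simp [chi, hφe e' h]
      have h2 : chi (φ e') e' ≤ S e' :=
        Finset.single_le_sum (f := fun e => chi (φ e) e') (fun x _ => Nat.zero_le _)
          ((hF e').2 h)
      simp only [chi, if_pos h]
      omega
    · simp [chi, h]
  set g : (V × V) → ℕ := fun e' => S e' - chi c₀ e' with hgdef
  have hsumS : ∀ e', S e' = chi c₀ e' + g e' := by
    intro e'; have := hle e'; simp only [hgdef]; omega
  have hsupp : ∀ e', g e' ≠ 0 → e' ∈ G.E := by
    intro e' he'
    have hS : S e' ≠ 0 := by simp only [hgdef] at he'; omega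
    obtain ⟨e, heF, he⟩ := Finset.exists_ne_zero_of_sum_ne_zero hS
    have hmem : e' ∈ φ e := by
      by_contra hmem; exact he (by simp [chi, hmem])
    exact (circuit_props (hφc e ((hF e).1 heF))).2.2.1 hmem
  have hbal : ∀ v : V, (∑ u : V, g (u, v)) = ∑ u : V, g (v, u) := by
    intro v
    have hSbal : (∑ u : V, S (u, v)) = ∑ u : V, S (v, u) := by
      simp only [hSdef]
      rw [Finset.sum_comm, Finset.sum_comm (s := Finset.univ)]
      refine Finset.sum_congr rfl (fun e heF => ?_)
      exact (circuit_props (hφc e ((hF e).1 heF))).2.2.2 v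
    have h1 : (∑ u : V, S (u, v)) = (∑ u : V, chi c₀ (u, v)) + ∑ u : V, g (u, v) := by
      rw [← Finset.sum_add_distrib]; exact Finset.sum_congr rfl (fun u _ => hsumS (u, v))
    have h2 : (∑ u : V, S (v, u)) = (∑ u : V, chi c₀ (v, u)) + ∑ u : V, g (v, u) := by
      rw [← Finset.sum_add_distrib]; exact Finset.sum_congr rfl (fun u _ => hsumS (v, u))
    have h3 := hbal₀ v
    omega
  obtain ⟨L, hL, hLe⟩ := decomp (G := G) (∑ e : V × V, g e) g rfl hsupp hbal
  have hCfin : (circuitsOf G \ {c₀}).Finite := Set.toFinite _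
  set D : Finset (Set (V × V)) := hCfin.toFinset with hDdef
  have hD : ∀ c, c ∈ D ↔ c ∈ circuitsOf G ∧ c ≠ c₀ := by
    intro c
    rw [hCfin.mem_toFinset]
    simp [Set.mem_diff]
  set m : ℕ := 1 + L.count c₀ with hmdef
  set a : Set (V × V) → ℕ := fun c => (F.filter fun e => φ e = c).card with hadef
  set s : Set (V × V) → ℚ := fun c => ((a c : ℚ) - (L.count c : ℚ)) / m with hsdef
  have hkey : ∀ e, m * chi c₀ e + ∑ c ∈ D, L.count c * chi c e = ∑ c ∈ D, a c * chi c e := by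
    intro e
    have hmaps : ∀ e' ∈ F, φ e' ∈ D := by
      intro e' he'
      have h := (hF e').1 he'
      exact (hD _).2 ⟨hφc e' h, hφne e' h⟩
    have h1 : S e = ∑ c ∈ D, a c * chi c e := by
      show (∑ e' ∈ F, chi (φ e') e) = ∑ c ∈ D, a c * chi c e
      rw [← Finset.sum_fiberwise_of_maps_to hmaps (fun e' => chi (φ e') e)]
      refine Finset.sum_congr rfl (fun c hc => ?_)
      have : ∀ e' ∈ F.filter (fun e' => φ e' = c), chi (φ e') e = chi c e := by
        intro e' he'
        rw [(Finset.mem_filter.1 he').2]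
      rw [Finset.sum_congr rfl this, Finset.sum_const, hadef, smul_eq_mul]
    have hc₀D : c₀ ∉ D := fun h => ((hD c₀).1 h).2 rfl
    have hsub : L.toFinset ⊆ insert c₀ D := by
      intro c hc
      rcases eq_or_ne c c₀ with h | h
      · exact h ▸ Finset.mem_insert_self _ _
      · exact Finset.mem_insert_of_mem ((hD c).2 ⟨hL c (Multiset.mem_toFinset.1 hc), h⟩)
    have h2 : (L.map (fun c => chi c e)).sum =
        L.count c₀ * chi c₀ e + ∑ c ∈ D, L.count c * chi c e := by
      rw [Finset.sum_multiset_map_count]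
      rw [Finset.sum_subset hsub (fun c _ hc => by
        rw [Multiset.count_eq_zero_of_notMem (fun h => hc (Multiset.mem_toFinset.2 h))]
        simp)]
      rw [Finset.sum_insert hc₀D]
      simp [smul_eq_mul]
    have h3 : chi c₀ e + (L.map (fun c => chi c e)).sum = S e := by
      rw [← hLe e]; exact (hsumS e).symm
    rw [h2] at h3
    rw [← h1, ← h3, hmdef]
    ring
  refine ⟨s, fun e => ?_⟩
  rw [← hCfin.coe_toFinset, finsum_mem_coe_finset]
  have hm0 : (m : ℝ) ≠ 0 := by positivity
  have hkeyR : (m : ℝ) * chi c₀ e + ∑ c ∈ D, (L.count c : ℝ) * chi c e =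
      ∑ c ∈ D, (a c : ℝ) * chi c e := by
    have := congrArg (Nat.cast : ℕ → ℝ) (hkey e)
    push_cast at this
    exact this
  have hsumR : ∑ c ∈ D, ((a c : ℝ) - (L.count c : ℝ)) * (chi c e : ℝ) =
      (m : ℝ) * chi c₀ e := by
    simp only [sub_mul]
    rw [Finset.sum_sub_distrib]
    linarith
  have hs : ∀ c, (s c : ℝ) = ((a c : ℝ) - (L.count c : ℝ)) / (m : ℝ) := by
    intro c; rw [hsdef]; push_cast; ring
  calc circVec c₀ e = (chi c₀ e : ℝ) := circVec_eq_chi _ _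
    _ = ∑ c ∈ D, (s c : ℝ) * circVec c e := by
        rw [Finset.sum_congr rfl (fun c _ => by
          rw [hs c, circVec_eq_chi, div_mul_eq_mul_div])]
        rw [← Finset.sum_div, hsumR]
        field_simp

/-- A circuit `c₀` is a (rational) linear combination of the
other circuits iff each of its edges lies on another circuit. -/
theorem circuit_linear_combination_iff_edges_shared {V : Type} [Fintype V]
    (G : DirGraph V) (c₀ : Set (V × V)) (hc₀ : c₀ ∈ circuitsOf G) :
    ((∃ s : Set (V × V) → ℝ, ∀ e : V × V,
        circVec c₀ e = ∑ᶠ c ∈ circuitsOf G \ {c₀}, s c * circVec c e) ↔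
      ∀ e ∈ c₀, ∃ c ∈ circuitsOf G, c ≠ c₀ ∧ e ∈ c) ∧
    ((∀ e ∈ c₀, ∃ c ∈ circuitsOf G, c ≠ c₀ ∧ e ∈ c) →
      ∃ s : Set (V × V) → ℚ, ∀ e : V × V,
        circVec c₀ e = ∑ᶠ c ∈ circuitsOf G \ {c₀}, (s c : ℝ) * circVec c e) := by

  constructor
  · constructor
    · rintro ⟨s, hs⟩ e he
      by_contra hno
      push_neg at hno
      have hCfin : (circuitsOf G \ {c₀}).Finite := Set.toFinite _
      have hthis := hs e
      rw [← hCfin.coe_toFinset, finsum_mem_coe_finset] at hthis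
      have h0 : ∀ c ∈ hCfin.toFinset, s c * circVec c e = 0 := by
        intro c hc
        rw [hCfin.mem_toFinset, Set.mem_diff, Set.mem_singleton_iff] at hc
        have hnm : e ∉ c := hno c hc.1 hc.2
        simp [circVec, Set.indicator_of_notMem hnm]
      rw [Finset.sum_eq_zero h0] at hthis
      have h1 : circVec c₀ e = 1 := by simp [circVec, Set.indicator_of_mem he]
      rw [h1] at hthis; norm_num at hthis
    · intro h
      obtain ⟨s, hs⟩ := rational_comb hc₀ h
      exact ⟨fun c => (s c : ℝ), hs⟩
  · exact rational_comb hc₀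
end

section
/- Let G = (V,E) be a graph. Then the set 𝒞(G) of circuit graphs of G (viewed as vectors in the real vector space with basis E) is linearly independent if and only if every circuit graph c ∈ 𝒞(G) has an edge e that belongs to no other circuit graph of G. -/
open Filter Topology MeasureTheory

-- auxiliary definitions and lemmas
noncomputable def indNat {V : Type} (c : Set (V × V)) : V × V → ℕ :=
  c.indicator fun _ => 1

section myaux
set_option linter.unusedSectionVars false
variable {V : Type} [Fintype V] {G : DirGraph V}
open Classical

lemma indNat_apply (c : Set (V × V)) (e : V × V) :
    indNat c e = if e ∈ c then 1 else 0 := by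
  classical simp [indNat, Set.indicator_apply]

lemma circVec_apply (c : Set (V × V)) (e : V × V) :
    circVec c e = if e ∈ c then 1 else 0 := by
  classical simp [circVec, Set.indicator_apply]

lemma circuit_subset_E {c : Set (V × V)} (hc : c ∈ circuitsOf G) : c ⊆ G.E := by
  obtain ⟨l, hl, w, hw, -, -, rfl⟩ := hc
  rintro e ⟨i, rfl⟩
  exact hw i

lemma circuit_nonempty {c : Set (V × V)} (hc : c ∈ circuitsOf G) : ∃ e, e ∈ c := by
  obtain ⟨l, hl, w, -, -, -, rfl⟩ := hc
  exact ⟨_, ⟨⟨0, hl⟩, rfl⟩⟩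

lemma circuit_conservation {c : Set (V × V)} (hc : c ∈ circuitsOf G) (v : V) :
    (∑ u : V, indNat c (u, v)) = ∑ u : V, indNat c (v, u) := by
  classical
  obtain ⟨l, hl, w, hw, hclose, hs, rfl⟩ := hc
  -- injectivity of succ-images
  have inj_succ : ∀ i j : Fin l, w i.succ = w j.succ → i = j := by
    intro i j h
    rcases lt_trichotomy i j with hij | hij | hij
    · exact absurd ((hs _ _ (by simpa using hij) h).1) (Fin.succ_ne_zero i)
    · exact hij
    · exact absurd ((hs _ _ (by simpa using hij) h.symm).1) (Fin.succ_ne_zero j)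
  have inj_cast : ∀ i j : Fin l, w i.castSucc = w j.castSucc → i = j := by
    intro i j h
    rcases lt_trichotomy i j with hij | hij | hij
    · have := (hs _ _ (by simpa using hij) h).2
      exact absurd (this ▸ Fin.castSucc_lt_last j) (lt_irrefl _)
    · exact hij
    · have := (hs _ _ (by simpa using hij) h.symm).2
      exact absurd (this ▸ Fin.castSucc_lt_last i) (lt_irrefl _)
  have key : (∃ i : Fin l, w i.succ = v) ↔ (∃ i : Fin l, w i.castSucc = v) := by
    constructor
    · rintro ⟨i, rfl⟩
      by_cases hi : (i : ℕ) + 1 = l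
      · refine ⟨⟨0, hl⟩, ?_⟩
        have h1 : i.succ = Fin.last l := by ext; simpa using hi
        have h2 : (Fin.castSucc ⟨0, hl⟩ : Fin (l+1)) = 0 := rfl
        rw [h2, ← hclose, h1]
      · have hi' : (i : ℕ) + 1 < l := lt_of_le_of_ne (by exact i.2) hi
        refine ⟨⟨i + 1, hi'⟩, ?_⟩
        have he : (⟨(i:ℕ) + 1, hi'⟩ : Fin l).castSucc = i.succ := by
          ext; simp
        rw [he]
    · rintro ⟨i, rfl⟩
      by_cases hi : (i : ℕ) = 0
      · refine ⟨⟨l - 1, by omega⟩, ?_⟩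
        have h1 : (⟨l - 1, by omega⟩ : Fin l).succ = Fin.last l := by
          ext; simp; try omega
        rw [h1, hclose]
        have he : i.castSucc = (0 : Fin (l+1)) := by
          ext; simpa using hi
        rw [he]
      · refine ⟨⟨(i : ℕ) - 1, by omega⟩, ?_⟩
        have he : (⟨(i:ℕ) - 1, by omega⟩ : Fin l).succ = i.castSucc := by
          ext; simp; omega
        rw [he]
  have count_in : (∑ u : V, indNat (walkEdges w) (u, v))
      = if (∃ i : Fin l, w i.succ = v) then 1 else 0 := by
    by_cases hv : ∃ i : Fin l, w i.succ = v
    · obtain ⟨i, hi⟩ := hv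
      rw [if_pos ⟨i, hi⟩]
      rw [Finset.sum_eq_single_of_mem (w i.castSucc) (Finset.mem_univ _)]
      · rw [indNat_apply, if_pos ⟨i, by rw [hi]⟩]
      · intro u _ hu
        rw [indNat_apply, if_neg]
        rintro ⟨j, hj⟩
        have h1 : u = w j.castSucc := congrArg Prod.fst hj
        have h2 : v = w j.succ := congrArg Prod.snd hj
        rw [inj_succ j i (by rw [← h2, hi])] at h1
        exact hu h1
    · rw [if_neg hv]
      refine Finset.sum_eq_zero fun u _ => ?_
      rw [indNat_apply, if_neg]
      rintro ⟨j, hj⟩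
      exact hv ⟨j, (congrArg Prod.snd hj).symm⟩
  have count_out : (∑ u : V, indNat (walkEdges w) (v, u))
      = if (∃ i : Fin l, w i.castSucc = v) then 1 else 0 := by
    by_cases hv : ∃ i : Fin l, w i.castSucc = v
    · obtain ⟨i, hi⟩ := hv
      rw [if_pos ⟨i, hi⟩]
      rw [Finset.sum_eq_single_of_mem (w i.succ) (Finset.mem_univ _)]
      · rw [indNat_apply, if_pos ⟨i, by rw [hi]⟩]
      · intro u _ hu
        rw [indNat_apply, if_neg]
        rintro ⟨j, hj⟩
        have h1 : v = w j.castSucc := congrArg Prod.fst hj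
        have h2 : u = w j.succ := congrArg Prod.snd hj
        rw [inj_cast j i (by rw [← h1, hi])] at h2
        exact hu h2
    · rw [if_neg hv]
      refine Finset.sum_eq_zero fun u _ => ?_
      rw [indNat_apply, if_neg]
      rintro ⟨j, hj⟩
      exact hv ⟨j, (congrArg Prod.fst hj).symm⟩
  rw [count_in, count_out]
  simp only [key]


lemma exists_circuit_in_support (g : V × V → ℕ)
    (hE : ∀ e, g e ≠ 0 → e ∈ G.E)
    (hcons : ∀ v : V, (∑ u : V, g (u, v)) = ∑ u : V, g (v, u))
    {e₀ : V × V} (he₀ : g e₀ ≠ 0) :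
    ∃ c ∈ circuitsOf G, ∀ e ∈ c, g e ≠ 0 := by
  classical
  -- inflow positive implies outflow positive
  have io : ∀ p : V, (∃ u, g (u, p) ≠ 0) → ∃ u, g (p, u) ≠ 0 := by
    rintro p ⟨u, hu⟩
    by_contra h
    push_neg at h
    have h0 : (∑ x : V, g (p, x)) = 0 := Finset.sum_eq_zero fun x _ => h x
    have h1 : (∑ x : V, g (x, p)) = 0 := (hcons p).trans h0
    exact hu ((Finset.sum_eq_zero_iff.mp h1) u (Finset.mem_univ u))
  set F : V → V := fun p => if h : ∃ u, g (p, u) ≠ 0 then h.choose else p with hF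
  have hFspec : ∀ p : V, (∃ u, g (p, u) ≠ 0) → g (p, F p) ≠ 0 := by
    intro p hp
    simp only [hF, dif_pos hp]
    exact hp.choose_spec
  set seq : ℕ → V := fun n => F^[n] e₀.2 with hseqdef
  have hseqsucc : ∀ n, seq (n + 1) = F (seq n) := by
    intro n; simp [hseqdef, Function.iterate_succ_apply']
  have inv : ∀ n, ∃ u, g (u, seq n) ≠ 0 := by
    intro n
    induction n with
    | zero => exact ⟨e₀.1, by simpa [hseqdef] using he₀⟩
    | succ n ih =>
      refine ⟨seq n, ?_⟩
      rw [hseqsucc n]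
      exact hFspec _ (io _ ih)
  have edge : ∀ n, g (seq n, seq (n + 1)) ≠ 0 := by
    intro n
    rw [hseqsucc n]
    exact hFspec _ (io _ (inv n))
  -- pigeonhole
  obtain ⟨x, y, hxy, hmap⟩ := Finite.exists_ne_map_eq_of_infinite seq
  have hQ : ∃ m, ∃ r, r < m ∧ seq r = seq m := by
    rcases hxy.lt_or_gt with h | h
    · exact ⟨y, x, h, hmap⟩
    · exact ⟨x, y, h, hmap.symm⟩
  set j := Nat.find hQ with hj
  obtain ⟨i, hij, hseqij⟩ := Nat.find_spec hQ
  set l := j - i with hldef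
  have hl : 0 < l := by omega
  set w : Fin (l + 1) → V := fun k => seq (i + (k : ℕ)) with hw
  have hwedge : ∀ k : Fin l, (w k.castSucc, w k.succ) = (seq (i + k), seq (i + k + 1)) := by
    intro k
    simp [hw, Fin.coe_castSucc, Fin.val_succ, Nat.add_assoc]
  refine ⟨walkEdges w, ⟨l, hl, w, ?_, ?_, ?_, rfl⟩, ?_⟩
  · intro k
    rw [hwedge k]
    exact hE _ (edge (i + k))
  · have h1 : i + l = j := by omega
    simp only [hw, Fin.val_last, Fin.val_zero, Nat.add_zero, h1]
    exact hseqij.symm ▸ rfl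
  · intro p q hpq hwpq
    simp only [hw] at hwpq
    have hql : (q : ℕ) ≤ l := by omega
    have hq : i + (q : ℕ) = j := by
      by_contra hc
      have hlt : i + (q : ℕ) < j := by omega
      exact Nat.find_min hQ hlt ⟨i + p, by have := Fin.lt_iff_val_lt_val.mp hpq; omega, hwpq⟩
    have hp0 : (p : ℕ) = 0 := by
      by_contra hc
      have hlt : i + (p : ℕ) < j := by have := Fin.lt_iff_val_lt_val.mp hpq; omega
      refine Nat.find_min hQ hlt ⟨i, by omega, ?_⟩
      rw [hwpq, hq, ← hseqij]
    constructor
    · exact Fin.ext hp0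
    · exact Fin.ext (by simp; omega)
  · rintro e ⟨k, rfl⟩
    rw [hwedge k]
    exact edge (i + k)

lemma circulation_decomp (N : ℕ) : ∀ g : V × V → ℕ,
    (∑ e : V × V, g e) = N →
    (∀ e, g e ≠ 0 → e ∈ G.E) →
    (∀ v : V, (∑ u : V, g (u, v)) = ∑ u : V, g (v, u)) →
    ∃ n : ℕ, ∃ cs : Fin n → Set (V × V), (∀ i, cs i ∈ circuitsOf G) ∧
      ∀ e, g e = ∑ i : Fin n, indNat (cs i) e := by
  classical
  induction N using Nat.strong_induction_on with
  | _ N ih =>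
    intro g hN hE hcons
    by_cases hz : ∀ e, g e = 0
    · exact ⟨0, Fin.elim0, fun i => i.elim0, fun e => by simp [hz e]⟩
    · push_neg at hz
      obtain ⟨e₀, he₀⟩ := hz
      obtain ⟨c, hc, hcsupp⟩ := exists_circuit_in_support (G := G) g hE hcons he₀
      have hle : ∀ e, indNat c e ≤ g e := by
        intro e
        rw [indNat_apply]
        split
        · exact Nat.one_le_iff_ne_zero.mpr (hcsupp e ‹_›)
        · exact Nat.zero_le _
      set g' : V × V → ℕ := fun e => g e - indNat c e with hg'
      have hsum : ∀ e, g e = g' e + indNat c e := by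
        intro e; simp only [hg']
        exact (Nat.sub_add_cancel (hle e)).symm
      have hE' : ∀ e, g' e ≠ 0 → e ∈ G.E := by
        intro e he
        apply hE
        intro h0
        apply he
        simp [hg', h0]
      have hcons' : ∀ v : V, (∑ u : V, g' (u, v)) = ∑ u : V, g' (v, u) := by
        intro v
        have h1 : (∑ u : V, g (u, v)) = (∑ u : V, g' (u, v)) + ∑ u : V, indNat c (u, v) := by
          rw [← Finset.sum_add_distrib]
          exact Finset.sum_congr rfl fun u _ => hsum (u, v)
        have h2 : (∑ u : V, g (v, u)) = (∑ u : V, g' (v, u)) + ∑ u : V, indNat c (v, u) := by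
          rw [← Finset.sum_add_distrib]
          exact Finset.sum_congr rfl fun u _ => hsum (v, u)
        have h3 := circuit_conservation (G := G) hc v
        have h4 := hcons v
        omega
      have hTsplit : (∑ e : V × V, g e) = (∑ e : V × V, g' e) + ∑ e : V × V, indNat c e := by
        rw [← Finset.sum_add_distrib]
        exact Finset.sum_congr rfl fun e _ => hsum e
      obtain ⟨ec, hec⟩ := circuit_nonempty (G := G) hc
      have hpos : 0 < ∑ e : V × V, indNat c e := by
        refine Finset.sum_pos' (fun e _ => Nat.zero_le _) ⟨ec, Finset.mem_univ _, ?_⟩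
        rw [indNat_apply, if_pos hec]; omega
      have hlt : (∑ e : V × V, g' e) < N := by omega
      obtain ⟨n, cs, hcs, hdec⟩ := ih _ hlt g' rfl hE' hcons'
      refine ⟨n + 1, Fin.cons c cs, ?_, ?_⟩
      · intro i
        refine Fin.cases ?_ ?_ i
        · simpa using hc
        · intro k; simpa using hcs k
      · intro e
        rw [Fin.sum_univ_succ]
        simp only [Fin.cons_zero, Fin.cons_succ]
        rw [hsum e, hdec e]
        omega

open Classical in
lemma sum_subtype_ite [Fintype ↥(circuitsOf G)] {d : Set (V × V)} (hd : d ∈ circuitsOf G)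
    (r : ℝ) :
    (∑ x : ↥(circuitsOf G), if (x : Set (V × V)) = d then r else 0) = r := by
  have := Finset.sum_eq_single_of_mem
    (f := fun x : ↥(circuitsOf G) => if (x : Set (V × V)) = d then r else 0)
    (⟨d, hd⟩ : ↥(circuitsOf G)) (Finset.mem_univ _)
    (fun j _ hj => if_neg fun h => hj (Subtype.ext h))
  simpa using this



end myaux


/-- The set of circuits of `G` is linearly independent iff
every circuit has an edge belonging to no other circuit. -/
theorem circuits_linearIndependent_iff_private_edges {V : Type} [Fintype V]
    (G : DirGraph V) :
    LinearIndependent ℝ (fun c : circuitsOf G => circVec (c : Set (V × V))) ↔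
      ∀ c ∈ circuitsOf G, ∃ e ∈ c, ∀ c' ∈ circuitsOf G, c' ≠ c → e ∉ c' := by
  classical
  haveI : Fintype ↥(circuitsOf G) := Fintype.ofFinite _
  constructor
  · intro hli c hc
    by_contra hno
    push_neg at hno
    choose! D hD1 hD2 hD3 using hno
    set cF := (Set.toFinite c).toFinset with hcF
    have hmemF : ∀ e, e ∈ cF ↔ e ∈ c := fun e => Set.Finite.mem_toFinset _
    set g : V × V → ℕ := fun e => ∑ e' ∈ cF, indNat (D e') e with hg
    have hE : ∀ e, g e ≠ 0 → e ∈ G.E := by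
      intro e he
      by_contra hE0
      apply he
      refine Finset.sum_eq_zero fun e' he' => ?_
      rw [indNat_apply, if_neg]
      intro hmem
      exact hE0 (circuit_subset_E (hD1 e' ((hmemF e').mp he')) hmem)
    have hcons : ∀ v : V, (∑ u : V, g (u, v)) = ∑ u : V, g (v, u) := by
      intro v
      simp only [hg]
      rw [Finset.sum_comm, Finset.sum_comm (s := Finset.univ) (t := cF)]
      refine Finset.sum_congr rfl fun e' he' => ?_
      exact circuit_conservation (G := G) (hD1 e' ((hmemF e').mp he')) v
    have hge : ∀ e, indNat c e ≤ g e := by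
      intro e
      rw [indNat_apply]
      split
      · rename_i hecc
        calc 1 = indNat (D e) e := by
                rw [indNat_apply, if_pos (hD3 e hecc)]
          _ ≤ g e := Finset.single_le_sum (f := fun e' => indNat (D e') e)
                (fun e' _ => Nat.zero_le _) ((hmemF e).mpr hecc)
      · exact Nat.zero_le _
    set h : V × V → ℕ := fun e => g e - indNat c e with hh
    have hsum : ∀ e, g e = h e + indNat c e := by
      intro e; simp only [hh]
      exact (Nat.sub_add_cancel (hge e)).symm
    have hE' : ∀ e, h e ≠ 0 → e ∈ G.E := by
      intro e he
      refine hE e fun h0 => he ?_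
      simp [hh, h0]
    have hcons' : ∀ v : V, (∑ u : V, h (u, v)) = ∑ u : V, h (v, u) := by
      intro v
      have h1 : (∑ u : V, g (u, v)) = (∑ u : V, h (u, v)) + ∑ u : V, indNat c (u, v) := by
        rw [← Finset.sum_add_distrib]
        exact Finset.sum_congr rfl fun u _ => hsum (u, v)
      have h2 : (∑ u : V, g (v, u)) = (∑ u : V, h (v, u)) + ∑ u : V, indNat c (v, u) := by
        rw [← Finset.sum_add_distrib]
        exact Finset.sum_congr rfl fun u _ => hsum (v, u)
      have h3 := circuit_conservation (G := G) hc v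
      have h4 := hcons v
      omega
    obtain ⟨n, cs, hcs, hdec⟩ := circulation_decomp (G := G) (∑ e : V × V, h e) h rfl hE' hcons'
    have hkey : ∀ e, (∑ e' ∈ cF, indNat (D e') e) = indNat c e + ∑ i : Fin n, indNat (cs i) e := by
      intro e
      rw [← hdec e]
      have h5 := hsum e
      simp only [hg] at h5
      omega
    -- real coefficients
    set t : ↥(circuitsOf G) → ℝ := fun x =>
      (∑ e' ∈ cF, if D e' = (x : Set (V × V)) then (1:ℝ) else 0) -
        ((if (x : Set (V × V)) = c then (1:ℝ) else 0) +
          ∑ i : Fin n, if cs i = (x : Set (V × V)) then (1:ℝ) else 0) with ht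
    have hrel : (∑ x : ↥(circuitsOf G), t x • circVec (x : Set (V × V))) = 0 := by
      funext e
      rw [Finset.sum_apply]
      simp only [Pi.smul_apply, smul_eq_mul, ht, Pi.zero_apply]
      have hS1 : (∑ x : ↥(circuitsOf G),
          (∑ e' ∈ cF, if D e' = (x : Set (V × V)) then (1:ℝ) else 0) * circVec (x : Set (V × V)) e)
          = ∑ e' ∈ cF, circVec (D e') e := by
        simp only [Finset.sum_mul]
        rw [Finset.sum_comm]
        refine Finset.sum_congr rfl fun e' he' => ?_
        have : ∀ x : ↥(circuitsOf G),
            (if D e' = (x : Set (V × V)) then (1:ℝ) else 0) * circVec (x : Set (V × V)) e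
            = if (x : Set (V × V)) = D e' then circVec (D e') e else 0 := by
          intro x
          by_cases hx : D e' = (x : Set (V × V))
          · rw [if_pos hx, if_pos hx.symm, hx, one_mul]
          · rw [if_neg hx, if_neg (Ne.symm hx), zero_mul]
        rw [Finset.sum_congr rfl fun x _ => this x]
        exact sum_subtype_ite (hD1 e' ((hmemF e').mp he')) _
      have hS2 : (∑ x : ↥(circuitsOf G),
          (if (x : Set (V × V)) = c then (1:ℝ) else 0) * circVec (x : Set (V × V)) e)
          = circVec c e := by
        have : ∀ x : ↥(circuitsOf G),
            (if (x : Set (V × V)) = c then (1:ℝ) else 0) * circVec (x : Set (V × V)) e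
            = if (x : Set (V × V)) = c then circVec c e else 0 := by
          intro x
          by_cases hx : (x : Set (V × V)) = c
          · rw [if_pos hx, if_pos hx, hx, one_mul]
          · rw [if_neg hx, if_neg hx, zero_mul]
        rw [Finset.sum_congr rfl fun x _ => this x]
        exact sum_subtype_ite hc _
      have hS3 : (∑ x : ↥(circuitsOf G),
          (∑ i : Fin n, if cs i = (x : Set (V × V)) then (1:ℝ) else 0) * circVec (x : Set (V × V)) e)
          = ∑ i : Fin n, circVec (cs i) e := by
        simp only [Finset.sum_mul]
        rw [Finset.sum_comm]
        refine Finset.sum_congr rfl fun i _ => ?_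
        have : ∀ x : ↥(circuitsOf G),
            (if cs i = (x : Set (V × V)) then (1:ℝ) else 0) * circVec (x : Set (V × V)) e
            = if (x : Set (V × V)) = cs i then circVec (cs i) e else 0 := by
          intro x
          by_cases hx : cs i = (x : Set (V × V))
          · rw [if_pos hx, if_pos hx.symm, hx, one_mul]
          · rw [if_neg hx, if_neg (Ne.symm hx), zero_mul]
        rw [Finset.sum_congr rfl fun x _ => this x]
        exact sum_subtype_ite (hcs i) _
      have hcast : (∑ e' ∈ cF, circVec (D e') e)
          = circVec c e + ∑ i : Fin n, circVec (cs i) e := by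
        have hcv : ∀ d : Set (V × V), circVec d e = ((indNat d e : ℕ) : ℝ) := by
          intro d
          rw [circVec_apply, indNat_apply]
          split <;> simp
        simp only [hcv]
        rw [← Nat.cast_sum, ← Nat.cast_sum]
        exact_mod_cast hkey e
      simp only [sub_mul, add_mul]
      rw [Finset.sum_sub_distrib, Finset.sum_add_distrib, hS1, hS2, hS3, hcast]
      ring
    have hzero := Fintype.linearIndependent_iff.mp hli t hrel ⟨c, hc⟩
    have hA : (∑ e' ∈ cF, if D e' = c then (1:ℝ) else 0) = 0 := by
      refine Finset.sum_eq_zero fun e' he' => ?_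
      rw [if_neg (hD2 e' ((hmemF e').mp he'))]
    have hB : (0:ℝ) ≤ ∑ i : Fin n, if cs i = c then (1:ℝ) else 0 :=
      Finset.sum_nonneg fun i _ => by split <;> norm_num
    rw [ht] at hzero
    norm_num [hA] at hzero
    linarith
  · intro hpriv
    rw [linearIndependent_iff']
    intro s gg hrel i hi
    obtain ⟨e, he, hpe⟩ := hpriv (i : Set (V × V)) i.2
    have h0 := congrFun hrel e
    rw [Finset.sum_apply] at h0
    simp only [Pi.smul_apply, smul_eq_mul, Pi.zero_apply] at h0
    rw [Finset.sum_eq_single_of_mem i hi] at h0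
    · rw [circVec_apply, if_pos he, mul_one] at h0
      exact h0
    · intro j _ hj
      rw [circVec_apply, if_neg, mul_zero]
      exact hpe (j : Set (V × V)) j.2 fun hjc => hj (Subtype.ext hjc)
end

section
/- Let G = (V,E) be a graph. Then for every circuit graph c ∈ 𝒞(G), the point c̃ = (1/Per(c))·Σ_{e∈E(c)} e is an extreme point of the convex set 𝒫(G). -/
open Filter Topology MeasureTheory

section CircuitAux

variable {V : Type} [Fintype V] [DecidableEq V] {l : ℕ}

theorem cs_inj (w : Fin (l + 1) → V)
    (hdist : ∀ i j : Fin (l + 1), i < j → w i = w j → i = 0 ∧ j = Fin.last l)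
    {i j : Fin l} (h : w i.castSucc = w j.castSucc) : i = j := by
  rcases lt_trichotomy i j with hij | hij | hij
  · have h2 := (hdist i.castSucc j.castSucc (by simpa using hij) h).2
    have : (j : ℕ) = l := by simpa using congrArg Fin.val h2
    exact absurd this (by omega)
  · exact hij
  · have h2 := (hdist j.castSucc i.castSucc (by simpa using hij) h.symm).2
    have : (i : ℕ) = l := by simpa using congrArg Fin.val h2
    exact absurd this (by omega)

theorem succ_inj (w : Fin (l + 1) → V)
    (hdist : ∀ i j : Fin (l + 1), i < j → w i = w j → i = 0 ∧ j = Fin.last l)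
    {i j : Fin l} (h : w i.succ = w j.succ) : i = j := by
  rcases lt_trichotomy i j with hij | hij | hij
  · have h2 := (hdist i.succ j.succ (by simpa using hij) h).1
    have : (i : ℕ) + 1 = 0 := by simpa using congrArg Fin.val h2
    exact absurd this (by omega)
  · exact hij
  · have h2 := (hdist j.succ i.succ (by simpa using hij) h.symm).1
    have : (j : ℕ) + 1 = 0 := by simpa using congrArg Fin.val h2
    exact absurd this (by omega)

set_option linter.unusedSectionVars false

/-- The successor index along the circuit. -/
def nxt (hl : 0 < l) (i : Fin l) : Fin l :=
  if h : (i : ℕ) + 1 < l then ⟨(i : ℕ) + 1, h⟩ else ⟨0, hl⟩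

theorem nxt_spec (hl : 0 < l) (w : Fin (l + 1) → V)
    (hclose : w (Fin.last l) = w 0) (i : Fin l) :
    w (nxt hl i).castSucc = w i.succ := by
  unfold nxt
  by_cases h : (i : ℕ) + 1 < l
  · rw [dif_pos h]
    rfl
  · rw [dif_neg h]
    have hi : (i : ℕ) + 1 = l := by have := i.isLt; omega
    have h1 : (⟨0, hl⟩ : Fin l).castSucc = (0 : Fin (l + 1)) := by ext; simp
    have h2 : i.succ = Fin.last l := by ext; simpa using hi
    rw [h1, h2, hclose]

theorem exists_prev (hl : 0 < l) (w : Fin (l + 1) → V)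
    (hclose : w (Fin.last l) = w 0) (i : Fin l) :
    ∃ j : Fin l, w j.succ = w i.castSucc := by
  by_cases h : (i : ℕ) = 0
  · refine ⟨⟨l - 1, by omega⟩, ?_⟩
    have h2 : (⟨l - 1, by omega⟩ : Fin l).succ = Fin.last l := by
      ext; simp only [Fin.val_succ, Fin.val_last]; omega
    have h3 : i.castSucc = (0 : Fin (l + 1)) := by ext; simpa using h
    rw [h2, h3, hclose]
  · refine ⟨⟨(i : ℕ) - 1, by have := i.isLt; omega⟩, ?_⟩
    congr 1
    ext
    simp
    omega

theorem sum_in (w : Fin (l + 1) → V)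
    (hdist : ∀ i j : Fin (l + 1), i < j → w i = w j → i = 0 ∧ j = Fin.last l)
    (x : V × V → ℝ) (hsupp : ∀ e ∉ walkEdges w, x e = 0) (v : V) :
    (∑ u : V, x (u, v)) =
      ∑ i : Fin l, if w i.succ = v then x (w i.castSucc, w i.succ) else 0 := by
  classical
  have key : ∀ u : V, x (u, v) =
      ∑ i : Fin l, if u = w i.castSucc ∧ w i.succ = v
        then x (w i.castSucc, w i.succ) else 0 := by
    intro u
    by_cases hm : (u, v) ∈ walkEdges w
    · obtain ⟨i₀, hi₀⟩ := hm
      have hu : u = w i₀.castSucc := congrArg Prod.fst hi₀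
      have hv : w i₀.succ = v := (congrArg Prod.snd hi₀).symm
      rw [Finset.sum_eq_single i₀]
      · rw [if_pos ⟨hu, hv⟩, ← hu, hv]
      · intro j _ hj
        rw [if_neg]
        rintro ⟨h1, _⟩
        exact hj (cs_inj w hdist (h1.symm.trans hu).symm).symm
      · intro h; exact absurd (Finset.mem_univ i₀) h
    · rw [hsupp _ hm, Finset.sum_eq_zero]
      intro i _
      rw [if_neg]
      rintro ⟨h1, h2⟩
      exact hm ⟨i, by rw [Prod.ext_iff]; exact ⟨h1, h2.symm⟩⟩
  calc (∑ u : V, x (u, v))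
      = ∑ u : V, ∑ i : Fin l, if u = w i.castSucc ∧ w i.succ = v
          then x (w i.castSucc, w i.succ) else 0 := Finset.sum_congr rfl fun u _ => key u
    _ = ∑ i : Fin l, ∑ u : V, if u = w i.castSucc ∧ w i.succ = v
          then x (w i.castSucc, w i.succ) else 0 := Finset.sum_comm
    _ = ∑ i : Fin l, if w i.succ = v then x (w i.castSucc, w i.succ) else 0 := by
        refine Finset.sum_congr rfl fun i _ => ?_
        by_cases hp : w i.succ = v
        · simp [hp, Finset.sum_ite_eq']
        · simp [hp]

theorem sum_out (w : Fin (l + 1) → V)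
    (hdist : ∀ i j : Fin (l + 1), i < j → w i = w j → i = 0 ∧ j = Fin.last l)
    (x : V × V → ℝ) (hsupp : ∀ e ∉ walkEdges w, x e = 0) (v : V) :
    (∑ u : V, x (v, u)) =
      ∑ i : Fin l, if w i.castSucc = v then x (w i.castSucc, w i.succ) else 0 := by
  classical
  have key : ∀ u : V, x (v, u) =
      ∑ i : Fin l, if u = w i.succ ∧ w i.castSucc = v
        then x (w i.castSucc, w i.succ) else 0 := by
    intro u
    by_cases hm : (v, u) ∈ walkEdges w
    · obtain ⟨i₀, hi₀⟩ := hm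
      have hv : w i₀.castSucc = v := (congrArg Prod.fst hi₀).symm
      have hu : u = w i₀.succ := congrArg Prod.snd hi₀
      rw [Finset.sum_eq_single i₀]
      · rw [if_pos ⟨hu, hv⟩, hv, ← hu]
      · intro j _ hj
        rw [if_neg]
        rintro ⟨h1, _⟩
        exact hj (succ_inj w hdist (h1.symm.trans hu).symm).symm
      · intro h; exact absurd (Finset.mem_univ i₀) h
    · rw [hsupp _ hm, Finset.sum_eq_zero]
      intro i _
      rw [if_neg]
      rintro ⟨h1, h2⟩
      exact hm ⟨i, by rw [Prod.ext_iff]; exact ⟨h2.symm, h1⟩⟩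
  calc (∑ u : V, x (v, u))
      = ∑ u : V, ∑ i : Fin l, if u = w i.succ ∧ w i.castSucc = v
          then x (w i.castSucc, w i.succ) else 0 := Finset.sum_congr rfl fun u _ => key u
    _ = ∑ i : Fin l, ∑ u : V, if u = w i.succ ∧ w i.castSucc = v
          then x (w i.castSucc, w i.succ) else 0 := Finset.sum_comm
    _ = ∑ i : Fin l, if w i.castSucc = v then x (w i.castSucc, w i.succ) else 0 := by
        refine Finset.sum_congr rfl fun i _ => ?_
        by_cases hp : w i.castSucc = v
        · simp [hp, Finset.sum_ite_eq']
        · simp [hp]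

theorem sum_total (w : Fin (l + 1) → V)
    (hdist : ∀ i j : Fin (l + 1), i < j → w i = w j → i = 0 ∧ j = Fin.last l)
    (x : V × V → ℝ) (hsupp : ∀ e ∉ walkEdges w, x e = 0) :
    (∑ e : V × V, x e) = ∑ i : Fin l, x (w i.castSucc, w i.succ) := by
  classical
  have key : ∀ e : V × V, x e =
      ∑ i : Fin l, if e = (w i.castSucc, w i.succ) then x (w i.castSucc, w i.succ) else 0 := by
    intro e
    by_cases hm : e ∈ walkEdges w
    · obtain ⟨i₀, hi₀⟩ := hm
      rw [Finset.sum_eq_single i₀]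
      · rw [if_pos hi₀, hi₀]
      · intro j _ hj
        rw [if_neg]
        intro h1
        have := congrArg Prod.fst (h1.symm.trans hi₀)
        exact hj (cs_inj w hdist this)
      · intro h; exact absurd (Finset.mem_univ i₀) h
    · rw [hsupp _ hm, Finset.sum_eq_zero]
      intro i _
      rw [if_neg]
      intro h1
      exact hm ⟨i, h1⟩
  calc (∑ e : V × V, x e)
      = ∑ e : V × V, ∑ i : Fin l, if e = (w i.castSucc, w i.succ)
          then x (w i.castSucc, w i.succ) else 0 := Finset.sum_congr rfl fun e _ => key e
    _ = ∑ i : Fin l, ∑ e : V × V, if e = (w i.castSucc, w i.succ)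
          then x (w i.castSucc, w i.succ) else 0 := Finset.sum_comm
    _ = ∑ i : Fin l, x (w i.castSucc, w i.succ) := by
        refine Finset.sum_congr rfl fun i _ => ?_
        simp [Finset.sum_ite_eq']

theorem count_eq (hl : 0 < l) (w : Fin (l + 1) → V)
    (hclose : w (Fin.last l) = w 0)
    (hdist : ∀ i j : Fin (l + 1), i < j → w i = w j → i = 0 ∧ j = Fin.last l)
    (r : ℝ) (v : V) :
    (∑ i : Fin l, if w i.succ = v then r else 0) =
      ∑ i : Fin l, if w i.castSucc = v then r else 0 := by
  by_cases hex : ∃ i : Fin l, w i.succ = v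
  · obtain ⟨i₀, hi₀⟩ := hex
    have hL : (∑ i : Fin l, if w i.succ = v then r else 0) = r := by
      rw [Finset.sum_eq_single i₀]
      · rw [if_pos hi₀]
      · intro j _ hj
        rw [if_neg]
        intro h1
        exact hj (succ_inj w hdist (h1.trans hi₀.symm))
      · intro h; exact absurd (Finset.mem_univ i₀) h
    have hR : (∑ i : Fin l, if w i.castSucc = v then r else 0) = r := by
      rw [Finset.sum_eq_single (nxt hl i₀)]
      · rw [if_pos ((nxt_spec hl w hclose i₀).trans hi₀)]
      · intro j _ hj
        rw [if_neg]
        intro h1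
        exact hj (cs_inj w hdist (h1.trans (((nxt_spec hl w hclose i₀).trans hi₀)).symm))
      · intro h; exact absurd (Finset.mem_univ _) h
    rw [hL, hR]
  · have hex' : ¬ ∃ i : Fin l, w i.castSucc = v := by
      rintro ⟨i, hi⟩
      obtain ⟨j, hj⟩ := exists_prev hl w hclose i
      exact hex ⟨j, hj.trans hi⟩
    rw [Finset.sum_eq_zero, Finset.sum_eq_zero]
    · intro i _; rw [if_neg fun h => hex' ⟨i, h⟩]
    · intro i _; rw [if_neg fun h => hex ⟨i, h⟩]

theorem ncard_walkEdges (w : Fin (l + 1) → V)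
    (hdist : ∀ i j : Fin (l + 1), i < j → w i = w j → i = 0 ∧ j = Fin.last l) :
    (walkEdges w).ncard = l := by
  have hrange : walkEdges w = Set.range (fun i : Fin l => (w i.castSucc, w i.succ)) := by
    ext e
    constructor
    · rintro ⟨i, hi⟩; exact ⟨i, hi.symm⟩
    · rintro ⟨i, hi⟩; exact ⟨i, hi.symm⟩
  have hinj : Function.Injective (fun i : Fin l => (w i.castSucc, w i.succ)) := by
    intro i j hij
    exact cs_inj w hdist (congrArg Prod.fst hij)
  rw [hrange, ← Set.image_univ, Set.ncard_image_of_injective _ hinj, Set.ncard_univ,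
    Nat.card_eq_fintype_card, Fintype.card_fin]

theorem circTilde_mem (w : Fin (l + 1) → V)
    (hdist : ∀ i j : Fin (l + 1), i < j → w i = w j → i = 0 ∧ j = Fin.last l)
    {e : V × V} (he : e ∈ walkEdges w) :
    circTilde (walkEdges w) e = ((l : ℝ))⁻¹ := by
  rw [circTilde, circVec, Set.indicator_of_mem he, ncard_walkEdges w hdist, mul_one]

theorem circTilde_notMem {c : Set (V × V)} {e : V × V} (he : e ∉ c) :
    circTilde c e = 0 := by
  rw [circTilde, circVec, Set.indicator_of_notMem he, mul_zero]

theorem eq_circTilde (hl : 0 < l) (w : Fin (l + 1) → V)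
    (hclose : w (Fin.last l) = w 0)
    (hdist : ∀ i j : Fin (l + 1), i < j → w i = w j → i = 0 ∧ j = Fin.last l)
    (x : V × V → ℝ) (hsupp : ∀ e ∉ walkEdges w, x e = 0)
    (hflow : ∀ v : V, (∑ u : V, x (u, v)) = ∑ u : V, x (v, u))
    (hmass : (∑ e : V × V, x e) = 1) :
    x = circTilde (walkEdges w) := by
  have hlR : (l : ℝ) ≠ 0 := Nat.cast_ne_zero.mpr hl.ne'
  -- constancy along the circuit
  have step : ∀ i : Fin l,
      x (w i.castSucc, w i.succ) = x (w (nxt hl i).castSucc, w (nxt hl i).succ) := by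
    intro i
    have h1 := (sum_in w hdist x hsupp (w i.succ)).symm.trans
      ((hflow (w i.succ)).trans (sum_out w hdist x hsupp (w i.succ)))
    have hL : (∑ j : Fin l, if w j.succ = w i.succ
        then x (w j.castSucc, w j.succ) else 0) = x (w i.castSucc, w i.succ) := by
      rw [Finset.sum_eq_single i]
      · rw [if_pos rfl]
      · intro j _ hj
        rw [if_neg fun h => hj (succ_inj w hdist h)]
      · intro h; exact absurd (Finset.mem_univ i) h
    have hR : (∑ j : Fin l, if w j.castSucc = w i.succ
        then x (w j.castSucc, w j.succ) else 0) =
        x (w (nxt hl i).castSucc, w (nxt hl i).succ) := by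
      rw [Finset.sum_eq_single (nxt hl i)]
      · rw [if_pos (nxt_spec hl w hclose i)]
      · intro j _ hj
        rw [if_neg fun h => hj (cs_inj w hdist (h.trans (nxt_spec hl w hclose i).symm))]
      · intro h; exact absurd (Finset.mem_univ _) h
    rw [← hL, h1, hR]
  have const : ∀ i : Fin l, x (w i.castSucc, w i.succ) = x (w (⟨0, hl⟩ : Fin l).castSucc,
      w (⟨0, hl⟩ : Fin l).succ) := by
    have key : ∀ k : ℕ, ∀ hk : k < l, x (w (⟨k, hk⟩ : Fin l).castSucc, w (⟨k, hk⟩ : Fin l).succ)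
        = x (w (⟨0, hl⟩ : Fin l).castSucc, w (⟨0, hl⟩ : Fin l).succ) := by
      intro k
      induction k with
      | zero => intro hk; rfl
      | succ n ih =>
        intro hk
        have hn : n < l := by omega
        have hnxt : nxt hl (⟨n, hn⟩ : Fin l) = ⟨n + 1, hk⟩ := by
          unfold nxt
          rw [dif_pos]
        rw [← hnxt, ← step ⟨n, hn⟩, ih hn]
    intro i
    have : i = ⟨(i : ℕ), i.isLt⟩ := rfl
    rw [this, key (i : ℕ) i.isLt]
  have hval : x (w (⟨0, hl⟩ : Fin l).castSucc, w (⟨0, hl⟩ : Fin l).succ) = (l : ℝ)⁻¹ := by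
    have h1 : (1 : ℝ) = (l : ℝ) * x (w (⟨0, hl⟩ : Fin l).castSucc, w (⟨0, hl⟩ : Fin l).succ) := by
      rw [← hmass, sum_total w hdist x hsupp]
      rw [Finset.sum_congr rfl fun i _ => const i, Finset.sum_const, Finset.card_univ,
        Fintype.card_fin, nsmul_eq_mul]
    exact eq_inv_of_mul_eq_one_right h1.symm
  funext e
  by_cases hm : e ∈ walkEdges w
  · obtain ⟨i, hi⟩ := hm
    rw [circTilde_mem w hdist ⟨i, hi⟩, hi, const i, hval]
  · rw [hsupp e hm, circTilde_notMem hm]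

theorem circTilde_memP (G : DirGraph V) (hl : 0 < l) (w : Fin (l + 1) → V)
    (hwalk : IsWalk G l w) (hclose : w (Fin.last l) = w 0)
    (hdist : ∀ i j : Fin (l + 1), i < j → w i = w j → i = 0 ∧ j = Fin.last l) :
    MemP G (circTilde (walkEdges w)) := by
  have hsupp : ∀ e ∉ walkEdges w, circTilde (walkEdges w) e = 0 :=
    fun e he => circTilde_notMem he
  refine ⟨⟨⟨?_, ?_⟩, ?_⟩, ?_⟩
  · intro e
    by_cases hm : e ∈ walkEdges w
    · rw [circTilde_mem w hdist hm]
      positivity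
    · rw [circTilde_notMem hm]
  · intro e he
    refine circTilde_notMem fun hm => ?_
    obtain ⟨i, hi⟩ := hm
    exact he (hi ▸ hwalk i)
  · intro v
    rw [sum_in w hdist _ hsupp v, sum_out w hdist _ hsupp v]
    have h1 : (∑ i : Fin l, if w i.succ = v
        then circTilde (walkEdges w) (w i.castSucc, w i.succ) else 0)
        = ∑ i : Fin l, if w i.succ = v then ((l : ℝ))⁻¹ else 0 :=
      Finset.sum_congr rfl fun i _ => by
        by_cases h : w i.succ = v
        · rw [if_pos h, if_pos h, circTilde_mem w hdist ⟨i, rfl⟩]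
        · rw [if_neg h, if_neg h]
    have h2 : (∑ i : Fin l, if w i.castSucc = v
        then circTilde (walkEdges w) (w i.castSucc, w i.succ) else 0)
        = ∑ i : Fin l, if w i.castSucc = v then ((l : ℝ))⁻¹ else 0 :=
      Finset.sum_congr rfl fun i _ => by
        by_cases h : w i.castSucc = v
        · rw [if_pos h, if_pos h, circTilde_mem w hdist ⟨i, rfl⟩]
        · rw [if_neg h, if_neg h]
    rw [h1, h2]
    exact count_eq hl w hclose hdist _ v
  · rw [sum_total w hdist _ hsupp]
    have h1 : (∑ i : Fin l, circTilde (walkEdges w) (w i.castSucc, w i.succ))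
        = ∑ _i : Fin l, ((l : ℝ))⁻¹ :=
      Finset.sum_congr rfl fun i _ => circTilde_mem w hdist ⟨i, rfl⟩
    rw [h1, Finset.sum_const, Finset.card_univ, Fintype.card_fin, nsmul_eq_mul,
      mul_inv_cancel₀ (Nat.cast_ne_zero.mpr hl.ne')]

end CircuitAux

/-- For every circuit `c` of `G`, the normalized circuit `c̃`
is an extreme point of the convex set `𝒫(G)`. -/

theorem circTilde_extremePoint {V : Type} [Fintype V] (G : DirGraph V)
    (c : Set (V × V)) (hc : c ∈ circuitsOf G) :
    circTilde c ∈ Set.extremePoints ℝ {a : V × V → ℝ | MemP G a} := by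
  classical
  obtain ⟨l, hl, w, hwalk, hclose, hdist, hce⟩ := hc
  subst hce
  rw [mem_extremePoints]
  refine ⟨circTilde_memP G hl w hwalk hclose hdist, ?_⟩
  intro x₁ hx₁ x₂ hx₂ hseg
  obtain ⟨a, b, ha, hb, hab, hsum⟩ := hseg
  have main : ∀ y z : V × V → ℝ, MemP G y → MemP G z → ∀ s t : ℝ, 0 < s → 0 < t →
      s • y + t • z = circTilde (walkEdges w) → y = circTilde (walkEdges w) := by
    intro y z hy hz s t hs ht hsum'
    have hsupp : ∀ e ∉ walkEdges w, y e = 0 := by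
      intro e he
      have h0 : circTilde (walkEdges w) e = 0 := circTilde_notMem he
      have he' := congrFun hsum' e
      simp only [Pi.add_apply, Pi.smul_apply, smul_eq_mul, h0] at he'
      have hy0 : 0 ≤ y e := hy.1.1.1 e
      have hz0 : 0 ≤ z e := hz.1.1.1 e
      have h1 : s * y e = 0 := by
        nlinarith [mul_nonneg hs.le hy0, mul_nonneg ht.le hz0]
      rcases mul_eq_zero.mp h1 with h | h
      · exact absurd h hs.ne'
      · exact h
    exact eq_circTilde hl w hclose hdist y hsupp hy.1.2 hy.2
  exact ⟨main x₁ x₂ hx₁ hx₂ a b ha hb hsum,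
    main x₂ x₁ hx₂ hx₁ b a hb ha (by rw [add_comm] at hsum; exact hsum)⟩
end

section
/- Let s, t be positive integers and 0 < ε ≤ 1/t. Let M = (m_{i,j})_{1≤i≤s, 1≤j≤t} be a real matrix with m_{i,j} ≥ ε for all i, j and Σ_{j=1}^{t} m_{i,j} = 1 for every 1 ≤ i ≤ s. Equip ℝ^s and ℝ^t with the ℓ¹ norm |x| = Σ_i |x_i|. If x = (x_1,…,x_s) ∈ ℝ^s satisfies Σ_{i=1}^{s} x_i = 0, and y ∈ ℝ^t is defined by y_j = Σ_{i=1}^{s} x_i m_{i,j}, then |y| ≤ (1 − tε)|x|. -/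
open Filter Topology MeasureTheory

/-- The contraction lemma for row-stochastic matrices with
entries bounded below by `ε`. -/
theorem row_stochastic_contraction (s t : ℕ) (hs : 0 < s) (ht : 0 < t)
    (ε : ℝ) (hε : 0 < ε) (hεt : ε ≤ 1 / (t : ℝ))
    (M : Fin s → Fin t → ℝ) (hM : ∀ i j, ε ≤ M i j)
    (hrow : ∀ i, (∑ j, M i j) = 1)
    (x : Fin s → ℝ) (hx : (∑ i, x i) = 0)
    (y : Fin t → ℝ) (hy : ∀ j, y j = ∑ i, x i * M i j) :
    (∑ j, |y j|) ≤ (1 - (t : ℝ) * ε) * ∑ i, |x i| := by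
  have hyj : ∀ j, y j = ∑ i, x i * (M i j - ε) := by
    intro j
    rw [hy]
    simp [mul_sub, Finset.sum_sub_distrib, ← Finset.sum_mul, hx]
  calc ∑ j, |y j| ≤ ∑ j, ∑ i, |x i| * (M i j - ε) := by
        apply Finset.sum_le_sum
        intro j _
        rw [hyj]
        refine (Finset.abs_sum_le_sum_abs _ _).trans (le_of_eq ?_)
        apply Finset.sum_congr rfl
        intro i _
        rw [abs_mul, abs_of_nonneg (sub_nonneg.2 (hM i j))]
    _ = ∑ i, |x i| * (1 - (t : ℝ) * ε) := by
        rw [Finset.sum_comm]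
        apply Finset.sum_congr rfl
        intro i _
        rw [← Finset.mul_sum, Finset.sum_sub_distrib, hrow, Finset.sum_const,
          Finset.card_univ, Fintype.card_fin, nsmul_eq_mul]
    _ = (1 - (t : ℝ) * ε) * ∑ i, |x i| := by
        rw [Finset.mul_sum]; apply Finset.sum_congr rfl; intros; ring
end

section
/- Let 𝒢 be a sequence of covers with inverse limit (X,f). Let 𝒞 = (𝒞_n)_{n∈ℕ} be a system of circuits enumerated by ℕ that expresses every f-invariant Borel probability measure, with 𝒞_n = {c(n,1),…,c(n,d_n)}. Suppose there are nonnegative integers m_n(i,j) (n ∈ ℕ, 1 ≤ i ≤ d_{n+1}, 1 ≤ j ≤ d_n) such that (φ_n)_*(c(n+1,i)) = Σ_{j=1}^{d_n} m_n(i,j)·c(n,j) for all n and i, and define the winding matrices M̄_n with entries m̄_n(i,j) := (Per(c(n,j))/Per(c(n+1,i)))·m_n(i,j). Suppose there exist real numbers ε_n > 0 with m̄_n(i,j) ≥ ε_n for all n, i, j, and such that Π_{i=n}^{∞} (1 − d_i·ε_i) = 0 for every n ∈ ℕ. Then (X,f) is uniquely ergodic, i.e. it has exactly one f-invariant Borel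 probability measure. -/
open Filter Topology MeasureTheory

namespace UEProof
open CoverSystem Set
open scoped Classical

variable {S : CoverSystem}

/-- projections agree at lower levels if they agree at a higher level -/
lemma proj_eq_of_higher (k : ℕ) {n : ℕ} {x y : S.X}
    (h : S.proj x (n + k) = S.proj y (n + k)) : S.proj x n = S.proj y n := by
  induction k with
  | zero => exact h
  | succ k ih =>
    apply ih
    have h' : x.1 (n + k + 1) = y.1 (n + k + 1) := h
    have : S.φ (n + k) (x.1 (n + k + 1))
        = S.φ (n + k) (y.1 (n + k + 1)) := by rw [h']
    rwa [x.2 (n + k), y.2 (n + k)] at this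

lemma proj_eq_of_le {n m : ℕ} (hnm : n ≤ m) {x y : S.X}
    (h : S.proj x m = S.proj y m) : S.proj x n = S.proj y n := by
  obtain ⟨k, rfl⟩ := Nat.le.dest hnm
  exact proj_eq_of_higher k h

lemma continuous_proj (n : ℕ) : Continuous (fun x : S.X => S.proj x n) := by
  have : (fun x : S.X => S.proj x n) = (fun g : ∀ m, S.V m => g n) ∘ Subtype.val := rfl
  rw [this]
  exact (continuous_apply n).comp continuous_subtype_val

lemma isOpen_USet {n : ℕ} (v : S.V n) : IsOpen (S.USet v) := by
  have : S.USet v = (fun x : S.X => S.proj x n) ⁻¹' {v} := rfl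
  rw [this]
  exact (continuous_proj n).isOpen_preimage _ (isOpen_discrete _)

lemma measurableSet_USet {n : ℕ} (v : S.V n) : MeasurableSet (S.USet v) :=
  (isOpen_USet v).measurableSet

/-- the collection of cylinder sets -/
def cylSets (S : CoverSystem) : Set (Set S.X) := {U | ∃ n, ∃ v : S.V n, U = S.USet v}

lemma countable_cylSets : (cylSets S).Countable := by
  have : cylSets S = ⋃ n : ℕ, Set.range (fun v : S.V n => S.USet v) := by
    ext U
    simp [cylSets, Set.mem_iUnion, Set.range, eq_comm]
  rw [this]
  exact Set.countable_iUnion (fun n => Set.countable_range _)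

lemma USet_subset_or_disj {n m : ℕ} (hnm : n ≤ m) (v : S.V n) (w : S.V m)
    {x : S.X} (hx : x ∈ S.USet v) (hx' : x ∈ S.USet w) : S.USet w ⊆ S.USet v := by
  intro y hy
  have h1 : S.proj y m = S.proj x m := by
    have hy' : S.proj y m = w := hy
    have hx2 : S.proj x m = w := hx'
    rw [hy', hx2]
  have h2 := proj_eq_of_le hnm h1
  show S.proj y n = v
  rw [h2]; exact hx

lemma isPiSystem_cylSets : IsPiSystem (cylSets S) := by
  rintro U ⟨n, v, rfl⟩ W ⟨m, w, rfl⟩ hne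
  obtain ⟨x, hx1, hx2⟩ := hne
  rcases le_total n m with h | h
  · have := USet_subset_or_disj h v w hx1 hx2
    have : S.USet v ∩ S.USet w = S.USet w := by
      apply Set.inter_eq_self_of_subset_right this
    rw [this]; exact ⟨m, w, rfl⟩
  · have := USet_subset_or_disj h w v hx2 hx1
    have : S.USet v ∩ S.USet w = S.USet v := by
      apply Set.inter_eq_self_of_subset_left this
    rw [this]; exact ⟨n, v, rfl⟩

/-- Cylinders form a basis: every open set is a union of cylinders. -/
lemma exists_cyl_subset {U : Set S.X} (hU : IsOpen U) {x : S.X} (hx : x ∈ U) :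
    ∃ n, S.USet (S.proj x n) ⊆ U := by
  change @IsOpen S.X (TopologicalSpace.induced (Subtype.val : S.X → ∀ n, S.V n) inferInstance) U at hU
  rw [isOpen_induced_iff] at hU
  obtain ⟨W, hW, rfl⟩ := hU
  rw [isOpen_pi_iff] at hW
  obtain ⟨I, u, hu, hsub⟩ := hW x.1 hx
  obtain ⟨n, hn⟩ : ∃ n, ∀ i ∈ I, i ≤ n := ⟨I.sup id, fun i hi => Finset.le_sup (f := id) hi⟩
  refine ⟨n, fun y hy => ?_⟩
  apply hsub
  intro i hi
  have : S.proj y i = S.proj x i := proj_eq_of_le (hn i hi) hy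
  have hyx : y.1 i = x.1 i := this
  show y.1 i ∈ u i
  rw [hyx]
  exact (hu i hi).2

lemma borel_eq_cyl : (borel S.X : MeasurableSpace S.X) = .generateFrom (cylSets S) := by
  refine le_antisymm ?_ ?_
  · show MeasurableSpace.generateFrom {s : Set S.X | IsOpen s} ≤ _
    refine MeasurableSpace.generateFrom_le ?_
    intro U hU
    have : U = ⋃₀ {s | s ∈ cylSets S ∧ s ⊆ U} := by
      apply Set.Subset.antisymm
      · intro x hx
        obtain ⟨n, hn⟩ := exists_cyl_subset hU hx
        exact ⟨S.USet (S.proj x n), ⟨⟨n, _, rfl⟩, hn⟩, rfl⟩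
      · intro x hx
        obtain ⟨s, ⟨_, hs⟩, hxs⟩ := hx
        exact hs hxs
    rw [this]
    apply MeasurableSet.sUnion
    · exact (countable_cylSets).mono (fun s hs => hs.1)
    · intro s hs
      exact MeasurableSpace.measurableSet_generateFrom hs.1
  · refine MeasurableSpace.generateFrom_le ?_
    rintro U ⟨n, v, rfl⟩
    exact (isOpen_USet v).measurableSet

lemma inst_eq_cyl : CoverSystem.instMeasurableSpaceX S = .generateFrom (cylSets S) :=
  borel_eq_cyl

/-- measures agreeing on cylinders are equal -/
lemma measure_ext_cyl {μ ν : MeasureTheory.Measure S.X}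
    [MeasureTheory.IsProbabilityMeasure μ] [MeasureTheory.IsProbabilityMeasure ν]
    (h : ∀ (n : ℕ) (v : S.V n), μ (S.USet v) = ν (S.USet v)) : μ = ν := by
  refine MeasureTheory.ext_of_generate_finite (cylSets S) inst_eq_cyl isPiSystem_cylSets ?_ ?_
  · rintro s ⟨n, v, rfl⟩; exact h n v
  · simp [MeasureTheory.measure_univ]

end UEProof
namespace UEProof
open CoverSystem Set
open scoped Classical

variable {S : CoverSystem}

/-- the "successor projection" map `ψ_n : V_{n+1} → V_n` determined by positive
directionality. -/
noncomputable def psi (S : CoverSystem) (n : ℕ) (u : S.V (n + 1)) : S.V n :=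
  S.φ n ((S.G (n + 1)).surj_init u).choose

lemma psi_spec {n : ℕ} {u w : S.V (n + 1)} (h : (u, w) ∈ (S.G (n + 1)).E) :
    S.φ n w = psi S n u := by
  have hc := ((S.G (n + 1)).surj_init u).choose_spec
  exact (S.cover n).posDir u _ _ h hc

variable {f : S.X → S.X}

lemma proj_f (hf : S.IsLimitMap f) (x : S.X) (n : ℕ) :
    S.proj (f x) n = psi S n (S.proj x (n + 1)) := by
  have h := hf x (n + 1)
  have := psi_spec h
  rw [← this]
  exact ((f x).2 n).symm

lemma continuous_f (hf : S.IsLimitMap f) : Continuous f := by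
  apply continuous_induced_rng.2
  apply continuous_pi
  intro n
  show Continuous fun x : S.X => (f x).1 n
  have : (fun x : S.X => (f x).1 n) = (fun x : S.X => psi S n (S.proj x (n + 1))) := by
    funext x; exact proj_f hf x n
  rw [this]
  exact Continuous.comp (g := psi S n) continuous_of_discreteTopology (continuous_proj (n + 1))

lemma measurable_f (hf : S.IsLimitMap f) : Measurable f :=
  (continuous_f hf).measurable

lemma measurableSet_UEdge (hf : S.IsLimitMap f) {n : ℕ} (e : S.V n × S.V n) :
    MeasurableSet (S.UEdge f e) := by
  have : S.UEdge f e = S.USet e.1 ∩ f ⁻¹' (S.USet e.2) := rfl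
  rw [this]
  exact (measurableSet_USet e.1).inter ((measurable_f hf) (measurableSet_USet e.2))

/-! ### pushVec basics -/

lemma pushVec_eq_sum {V₁ V₂ : Type} [Fintype V₁] (ψ : V₁ → V₂) (a : V₁ × V₁ → ℝ)
    (e : V₂ × V₂) :
    pushVec ψ a e = ∑ e' ∈ Finset.univ.filter (fun e' => edgeMap ψ e' = e), a e' := by
  rw [pushVec]
  rw [← finsum_mem_coe_finset]
  congr 1
  ext e'
  simp

lemma pushVec_total {V₁ V₂ : Type} [Fintype V₁] [Fintype V₂] (ψ : V₁ → V₂)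
    (a : V₁ × V₁ → ℝ) : ∑ e : V₂ × V₂, pushVec ψ a e = ∑ e' : V₁ × V₁, a e' := by
  simp only [pushVec_eq_sum]
  exact Finset.sum_fiberwise_of_maps_to (fun e' _ => Finset.mem_univ _) a

lemma pushVec_sum {V₁ V₂ : Type} [Fintype V₁] {ι : Type} (s : Finset ι)
    (ψ : V₁ → V₂) (a : ι → V₁ × V₁ → ℝ) (e : V₂ × V₂) :
    pushVec ψ (fun e' => ∑ i ∈ s, a i e') e = ∑ i ∈ s, pushVec ψ (a i) e := by
  simp only [pushVec_eq_sum]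
  exact Finset.sum_comm

lemma pushVec_smul {V₁ V₂ : Type} [Fintype V₁] (ψ : V₁ → V₂) (r : ℝ)
    (a : V₁ × V₁ → ℝ) (e : V₂ × V₂) :
    pushVec ψ (fun e' => r * a e') e = r * pushVec ψ a e := by
  simp only [pushVec_eq_sum]
  exact (Finset.mul_sum _ _ _).symm

lemma sum_ite_prod_fst {V₁ V₂ : Type} [Fintype V₁] (ψ : V₁ → V₂) (a : V₁ × V₁ → ℝ)
    (v : V₂) :
    ∑ e' ∈ Finset.univ.filter (fun e' : V₁ × V₁ => ψ e'.1 = v), a e'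
      = ∑ w ∈ Finset.univ.filter (fun w : V₁ => ψ w = v), ∑ u : V₁, a (w, u) := by
  rw [Finset.sum_filter, Finset.sum_filter, Fintype.sum_prod_type]
  apply Finset.sum_congr rfl
  intro w _
  by_cases h : ψ w = v <;> simp [h]

lemma sum_ite_prod_snd {V₁ V₂ : Type} [Fintype V₁] (ψ : V₁ → V₂) (a : V₁ × V₁ → ℝ)
    (v : V₂) :
    ∑ e' ∈ Finset.univ.filter (fun e' : V₁ × V₁ => ψ e'.2 = v), a e'
      = ∑ w ∈ Finset.univ.filter (fun w : V₁ => ψ w = v), ∑ u : V₁, a (u, w) := by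
  rw [Finset.sum_filter, Finset.sum_filter, Fintype.sum_prod_type, Finset.sum_comm]
  apply Finset.sum_congr rfl
  intro w _
  by_cases h : ψ w = v <;> simp [h]

/-- sum over the `ψ.1`-fiber: grouping the push by first coordinate of target -/
lemma pushVec_fst_fiber {V₁ V₂ : Type} [Fintype V₁] [Fintype V₂] (ψ : V₁ → V₂)
    (a : V₁ × V₁ → ℝ) (v : V₂) :
    ∑ u : V₂, pushVec ψ a (v, u) = ∑ e' ∈ Finset.univ.filter (fun e' : V₁ × V₁ => ψ e'.1 = v), a e' := by
  simp only [pushVec_eq_sum]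
  rw [← Finset.sum_fiberwise_of_maps_to (g := fun e' : V₁ × V₁ => ψ e'.2)
    (t := Finset.univ) (s := Finset.univ.filter (fun e' : V₁ × V₁ => ψ e'.1 = v))
    (fun e' _ => Finset.mem_univ _) a]
  apply Finset.sum_congr rfl
  intro u _
  apply Finset.sum_congr _ (fun _ _ => rfl)
  ext e'
  simp only [Finset.mem_filter, Finset.mem_univ, true_and, edgeMap, Prod.mk.injEq]
  try tauto

lemma pushVec_snd_fiber {V₁ V₂ : Type} [Fintype V₁] [Fintype V₂] (ψ : V₁ → V₂)
    (a : V₁ × V₁ → ℝ) (v : V₂) :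
    ∑ u : V₂, pushVec ψ a (u, v) = ∑ e' ∈ Finset.univ.filter (fun e' : V₁ × V₁ => ψ e'.2 = v), a e' := by
  simp only [pushVec_eq_sum]
  rw [← Finset.sum_fiberwise_of_maps_to (g := fun e' : V₁ × V₁ => ψ e'.1)
    (t := Finset.univ) (s := Finset.univ.filter (fun e' : V₁ × V₁ => ψ e'.2 = v))
    (fun e' _ => Finset.mem_univ _) a]
  apply Finset.sum_congr rfl
  intro u _
  apply Finset.sum_congr _ (fun _ _ => rfl)
  ext e'
  simp only [Finset.mem_filter, Finset.mem_univ, true_and, edgeMap, Prod.mk.injEq]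
  try tauto

/-- pushing along a cover preserves membership in the simplex `𝒫(G)`. -/
lemma pushVec_memP {V₁ V₂ : Type} [Fintype V₁] [Fintype V₂] {G₁ : DirGraph V₁}
    {G₂ : DirGraph V₂} {ψ : V₁ → V₂} (hψ : ∀ u v : V₁, (u, v) ∈ G₁.E → (ψ u, ψ v) ∈ G₂.E)
    {a : V₁ × V₁ → ℝ} (ha : MemP G₁ a) : MemP G₂ (pushVec ψ a) := by
  obtain ⟨⟨⟨hpos, hsupp⟩, hflow⟩, htot⟩ := ha
  refine ⟨⟨⟨?_, ?_⟩, ?_⟩, ?_⟩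
  · intro e
    rw [pushVec_eq_sum]
    exact Finset.sum_nonneg (fun e' _ => hpos e')
  · intro e he
    rw [pushVec_eq_sum]
    apply Finset.sum_eq_zero
    intro e' he'
    simp only [Finset.mem_filter] at he'
    by_contra hne
    have : e' ∈ G₁.E := by
      by_contra h'
      exact hne (hsupp e' h')
    have : edgeMap ψ e' ∈ G₂.E := hψ e'.1 e'.2 this
    rw [he'.2] at this
    exact he this
  · intro v
    rw [pushVec_fst_fiber, pushVec_snd_fiber]
    -- in-mass = sum over e' with ψ e'.2 = v ; out-mass = sum over e' with ψ e'.1 = v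
    -- regroup each by the V₁-vertex
    rw [sum_ite_prod_snd, sum_ite_prod_fst]
    exact Finset.sum_congr rfl (fun w _ => hflow w)
  · rw [pushVec_total]; exact htot

end UEProof
set_option linter.unusedSectionVars false
namespace UEProof
open Set
open scoped Classical

section Circuits

variable {V : Type} [Fintype V] {G : DirGraph V}

lemma walkEdges_eq_range {l : ℕ} (w : Fin (l + 1) → V) :
    walkEdges w = Set.range (fun i : Fin l => (w i.castSucc, w i.succ)) := by
  ext e; simp [walkEdges, eq_comm, Set.range]

section OneCircuit

variable {l : ℕ} (hl : 0 < l) {w : Fin (l + 1) → V}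
  (hwalk : IsWalk G l w) (hclose : w (Fin.last l) = w 0)
  (hdist : ∀ i j : Fin (l + 1), i < j → w i = w j → i = 0 ∧ j = Fin.last l)

include hdist in
lemma inIdx_subsingleton {v : V} {i j : Fin l}
    (hi : w i.succ = v) (hj : w j.succ = v) : i = j := by
  by_contra hne
  rcases lt_or_gt_of_ne (a := i) (b := j) hne with h | h
  · have := hdist i.succ j.succ (by simpa using h) (hi.trans hj.symm)
    exact absurd this.1 (by simp [Fin.ext_iff])
  · have := hdist j.succ i.succ (by simpa using h) (hj.trans hi.symm)
    exact absurd this.1 (by simp [Fin.ext_iff])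

include hdist in
lemma outIdx_subsingleton {v : V} {i j : Fin l}
    (hi : w i.castSucc = v) (hj : w j.castSucc = v) : i = j := by
  by_contra hne
  rcases lt_or_gt_of_ne (a := i) (b := j) hne with h | h
  · have := hdist i.castSucc j.castSucc (by simpa using h) (hi.trans hj.symm)
    exact absurd this.2 (by simp [Fin.ext_iff]; omega)
  · have := hdist j.castSucc i.castSucc (by simpa using h) (hj.trans hi.symm)
    exact absurd this.2 (by simp [Fin.ext_iff]; omega)

include hdist in
lemma emap_injective : Function.Injective (fun i : Fin l => (w i.castSucc, w i.succ)) := by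
  intro i j h
  simp only [Prod.mk.injEq] at h
  exact outIdx_subsingleton hdist h.1 rfl

include hdist in
lemma ncard_walkEdges : (walkEdges w).ncard = l := by
  rw [walkEdges_eq_range]
  rw [show Set.range (fun i : Fin l => (w i.castSucc, w i.succ))
    = ↑(Finset.univ.image (fun i : Fin l => (w i.castSucc, w i.succ))) by
      ext e; simp [Set.range]]
  rw [Set.ncard_coe_finset]
  rw [Finset.card_image_of_injective _ (emap_injective hdist)]
  simp

include hl hclose in
lemma exists_rotation : ∃ ρ : Equiv.Perm (Fin l),
    ∀ i : Fin l, w (ρ i).castSucc = w i.succ := by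
  obtain ⟨l', rfl⟩ := Nat.exists_eq_succ_of_ne_zero hl.ne'
  refine ⟨finRotate (l' + 1), fun i => ?_⟩
  rcases eq_or_ne i (Fin.last l') with rfl | hne
  · rw [finRotate_succ_apply]
    have h0 : Fin.last l' + 1 = 0 := by
      ext; simp [Fin.add_def]
    rw [h0]
    have : (Fin.last l').succ = Fin.last (l' + 1) := rfl
    rw [this, hclose]
    rfl
  · rw [finRotate_succ_apply]
    congr 1
    ext
    simp only [Fin.coe_castSucc, Fin.val_succ]
    rw [Fin.val_add_one_of_lt]
    exact lt_of_le_of_ne (Fin.le_last i) hne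

variable (G) in
include hwalk in
lemma walkEdges_subset : walkEdges w ⊆ G.E := by
  rintro e ⟨i, rfl⟩
  exact hwalk i

include hl hclose hdist in
lemma flow_walkEdges (v : V) :
    (Finset.univ.filter (fun u => (u, v) ∈ walkEdges w)).card
      = (Finset.univ.filter (fun u => (v, u) ∈ walkEdges w)).card := by
  obtain ⟨ρ, hρ⟩ := exists_rotation hl hclose
  -- in-set = image of in-indices under source map; similarly out
  have hin : Finset.univ.filter (fun u => (u, v) ∈ walkEdges w)
      = (Finset.univ.filter (fun i : Fin l => w i.succ = v)).image (fun i => w i.castSucc) := by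
    ext u
    simp only [Finset.mem_filter, Finset.mem_univ, true_and, Finset.mem_image, walkEdges,
      Set.mem_setOf_eq, Prod.mk.injEq]
    constructor
    · rintro ⟨i, hi1, hi2⟩; exact ⟨i, hi2.symm, hi1.symm⟩
    · rintro ⟨i, hi1, hi2⟩; exact ⟨i, hi2.symm, hi1.symm⟩
  have hout : Finset.univ.filter (fun u => (v, u) ∈ walkEdges w)
      = (Finset.univ.filter (fun i : Fin l => w i.castSucc = v)).image (fun i => w i.succ) := by
    ext u
    simp only [Finset.mem_filter, Finset.mem_univ, true_and, Finset.mem_image, walkEdges,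
      Set.mem_setOf_eq, Prod.mk.injEq]
    constructor
    · rintro ⟨i, hi1, hi2⟩; exact ⟨i, hi1.symm, hi2.symm⟩
    · rintro ⟨i, hi1, hi2⟩; exact ⟨i, hi1.symm, hi2.symm⟩
  rw [hin, hout]
  rw [Finset.card_image_of_injOn, Finset.card_image_of_injOn]
  · -- card of in-index set = card of out-index set, via the rotation ρ
    apply Finset.card_bij (fun i _ => ρ i)
    · intro i hi
      simp only [Finset.mem_filter, Finset.mem_univ, true_and] at hi ⊢
      rw [hρ i]; exact hi
    · intro i hi j hj h
      exact ρ.injective h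
    · intro j hj
      simp only [Finset.mem_filter, Finset.mem_univ, true_and] at hj
      refine ⟨ρ.symm j, ?_, by simp⟩
      simp only [Finset.mem_filter, Finset.mem_univ, true_and]
      have h2 := hρ (ρ.symm j)
      rw [Equiv.apply_symm_apply] at h2
      rw [← h2]
      exact hj
  · intro i hi j hj _
    simp only [Finset.coe_filter, Set.mem_setOf_eq] at hi hj
    exact outIdx_subsingleton hdist hi.2 hj.2
  · intro i hi j hj _
    simp only [Finset.coe_filter, Set.mem_setOf_eq] at hi hj
    exact inIdx_subsingleton hdist hi.2 hj.2

end OneCircuit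

lemma ncard_pos_of_circuit {cc : Set (V × V)} (h : IsCircuitIn G cc) : 0 < cc.ncard := by
  obtain ⟨l, hl, w, hwalk, hclose, hdist, rfl⟩ := h
  rw [ncard_walkEdges hdist]
  exact hl

lemma sum_indicator_eq_filter_card (cc : Set (V × V)) :
    ∑ e : V × V, cc.indicator (fun _ => (1 : ℝ)) e
      = ((Finset.univ.filter (fun e : V × V => e ∈ cc)).card : ℝ) := by
  rw [← Finset.sum_boole]
  apply Finset.sum_congr rfl
  intro e _
  rw [Set.indicator_apply]

lemma sum_circVec (cc : Set (V × V)) : ∑ e : V × V, circVec cc e = (cc.ncard : ℝ) := by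
  rw [circVec, sum_indicator_eq_filter_card]
  congr 1
  rw [Set.ncard_eq_toFinset_card']
  congr 1
  ext e; simp

lemma memP_circTilde {cc : Set (V × V)} (h : IsCircuitIn G cc) : MemP G (circTilde cc) := by
  have hpos := ncard_pos_of_circuit h
  have hne : ((cc.ncard : ℝ)) ≠ 0 := Nat.cast_ne_zero.2 hpos.ne'
  obtain ⟨l, hl, w, hwalk, hclose, hdist, rfl⟩ := h
  refine ⟨⟨⟨?_, ?_⟩, ?_⟩, ?_⟩
  · intro e
    apply mul_nonneg (by positivity)
    exact Set.indicator_nonneg (fun _ _ => zero_le_one) e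
  · intro e he
    have : e ∉ walkEdges w := fun hmem => he (walkEdges_subset G hwalk hmem)
    simp [circTilde, circVec, Set.indicator_of_notMem this]
  · intro v
    simp only [circTilde, ← Finset.mul_sum]
    congr 1
    have h1 : ∀ u, (walkEdges w).indicator (fun _ => (1:ℝ)) (u, v)
        = if (u, v) ∈ walkEdges w then 1 else 0 := fun u => Set.indicator_apply _ _ _
    have h2 : ∀ u, (walkEdges w).indicator (fun _ => (1:ℝ)) (v, u)
        = if (v, u) ∈ walkEdges w then 1 else 0 := fun u => Set.indicator_apply _ _ _
    simp only [circVec, h1, h2, Finset.sum_boole]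
    exact_mod_cast congrArg (Nat.cast (R := ℝ)) (flow_walkEdges hl hclose hdist v)
  · simp only [circTilde, ← Finset.mul_sum]
    rw [show (fun e => circVec (walkEdges w) e) = circVec (walkEdges w) from rfl]
    rw [sum_circVec]
    exact inv_mul_cancel₀ hne

lemma circTilde_nonneg {cc : Set (V × V)} (h : IsCircuitIn G cc) (e : V × V) :
    0 ≤ circTilde cc e := (memP_circTilde h).1.1.1 e

lemma sum_circTilde {cc : Set (V × V)} (h : IsCircuitIn G cc) :
    ∑ e : V × V, circTilde cc e = 1 := (memP_circTilde h).2

lemma circTilde_le_one {cc : Set (V × V)} (h : IsCircuitIn G cc) (e : V × V) :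
    circTilde cc e ≤ 1 := by
  have := Finset.single_le_sum (f := circTilde cc)
    (fun e _ => circTilde_nonneg h e) (Finset.mem_univ e)
  rw [sum_circTilde h] at this
  exact this

end Circuits
end UEProof
namespace UEProof
open Set MeasureTheory
open scoped Classical

variable {S : CoverSystem} {f : S.X → S.X}

lemma UEdge_pairwise_disj {n : ℕ} {e e' : S.V n × S.V n} (h : e ≠ e') :
    Disjoint (S.UEdge f e) (S.UEdge f e') := by
  rw [Set.disjoint_left]
  rintro x ⟨h1, h2⟩ ⟨h3, h4⟩
  exact h (Prod.ext (h1.symm.trans h3) (h2.symm.trans h4))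

lemma iUnion_UEdge (n : ℕ) : ⋃ e ∈ (Finset.univ : Finset (S.V n × S.V n)), S.UEdge f e = Set.univ := by
  ext x
  simp only [Set.mem_iUnion, Set.mem_univ, iff_true, Finset.mem_univ, exists_true_left]
  exact ⟨(S.proj x n, S.proj (f x) n), rfl, rfl⟩

lemma measure_eq_sum_UEdge (hf : S.IsLimitMap f) (μ : Measure S.X) (n : ℕ) :
    μ Set.univ = ∑ e : S.V n × S.V n, μ (S.UEdge f e) := by
  rw [← iUnion_UEdge (f := f) n]
  exact measure_biUnion_finset
    (fun e _ e' _ h => UEdge_pairwise_disj h)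
    (fun e _ => measurableSet_UEdge hf e)

lemma muVec_total (hf : S.IsLimitMap f) (μ : Measure S.X) [IsProbabilityMeasure μ] (n : ℕ) :
    ∑ e : S.V n × S.V n, S.muVec f μ n e = 1 := by
  have h := measure_eq_sum_UEdge hf μ n
  rw [measure_univ] at h
  have := ENNReal.toReal_sum (s := Finset.univ) (f := fun e : S.V n × S.V n => μ (S.UEdge f e))
    (fun e _ => measure_ne_top μ _)
  rw [← h] at this
  simp only [ENNReal.toReal_one] at this
  exact this.symm

lemma UEdge_eq_biUnion (hf : S.IsLimitMap f) {n : ℕ} (e : S.V n × S.V n) :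
    S.UEdge f e = ⋃ e' ∈ Finset.univ.filter
      (fun e' : S.V (n+1) × S.V (n+1) => edgeMap (S.φ n) e' = e), S.UEdge f e' := by
  ext x
  simp only [Set.mem_iUnion, Finset.mem_filter, Finset.mem_univ, true_and]
  constructor
  · rintro ⟨h1, h2⟩
    refine ⟨(S.proj x (n+1), S.proj (f x) (n+1)), ?_, rfl, rfl⟩
    have hx : S.φ n (S.proj x (n+1)) = S.proj x n := x.2 n
    have hfx : S.φ n (S.proj (f x) (n+1)) = S.proj (f x) n := (f x).2 n
    simp only [edgeMap]
    rw [hx, hfx, h1, h2]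
  · rintro ⟨e', he', h1, h2⟩
    have hx : S.φ n (S.proj x (n+1)) = S.proj x n := x.2 n
    have hfx : S.φ n (S.proj (f x) (n+1)) = S.proj (f x) n := (f x).2 n
    constructor
    · show S.proj x n = e.1
      rw [← hx, h1, ← he']; rfl
    · show S.proj (f x) n = e.2
      rw [← hfx, h2, ← he']; rfl

lemma muVec_push (hf : S.IsLimitMap f) (μ : Measure S.X) [IsProbabilityMeasure μ] (n : ℕ) :
    S.muVec f μ n = pushVec (S.φ n) (S.muVec f μ (n + 1)) := by
  funext e
  rw [pushVec_eq_sum]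
  show (μ (S.UEdge f e)).toReal = _
  rw [UEdge_eq_biUnion hf e]
  rw [measure_biUnion_finset (fun a _ b _ h => UEdge_pairwise_disj h)
    (fun e' _ => measurableSet_UEdge hf e')]
  exact ENNReal.toReal_sum (fun e' _ => measure_ne_top μ _)

lemma USet_eq_biUnion_UEdge {n : ℕ} (v : S.V n) :
    S.USet v = ⋃ u ∈ (Finset.univ : Finset (S.V n)), S.UEdge f (v, u) := by
  ext x
  simp only [Set.mem_iUnion, Finset.mem_univ, exists_true_left]
  constructor
  · intro hx
    exact ⟨S.proj (f x) n, hx, rfl⟩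
  · rintro ⟨u, h1, _⟩
    exact h1

lemma measure_USet_eq (hf : S.IsLimitMap f) (μ : Measure S.X) {n : ℕ} (v : S.V n) :
    μ (S.USet v) = ∑ u : S.V n, μ (S.UEdge f (v, u)) := by
  rw [USet_eq_biUnion_UEdge (f := f) v]
  exact measure_biUnion_finset (fun a _ b _ h => UEdge_pairwise_disj (by simp [h]))
    (fun u _ => measurableSet_UEdge hf _)

/-- if two invariant probability measures have equal `muVec` at every level they coincide -/
lemma eq_of_muVec_eq (hf : S.IsLimitMap f) {μ ν : Measure S.X}
    [IsProbabilityMeasure μ] [IsProbabilityMeasure ν]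
    (h : ∀ n, S.muVec f μ n = S.muVec f ν n) : μ = ν := by
  apply measure_ext_cyl
  intro n v
  rw [measure_USet_eq hf μ v, measure_USet_eq hf ν v]
  apply Finset.sum_congr rfl
  intro u _
  have := congrFun (h n) (v, u)
  exact (ENNReal.toReal_eq_toReal_iff' (measure_ne_top μ _) (measure_ne_top ν _)).1 this

end UEProof
namespace UEProof
open Set MeasureTheory Filter
open scoped Classical

section Contraction

variable {S : CoverSystem} {f : S.X → S.X}
variable {d : ℕ → ℕ} {c : ∀ n, Fin (d n) → Set (S.V n × S.V n)}
variable {M : ∀ n, Fin (d (n + 1)) → Fin (d n) → ℕ} {ε : ℕ → ℝ}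

/-- `Per c n j` = number of edges of the circuit `c n j`, as a real -/
noncomputable def Per (c : ∀ n, Fin (d n) → Set (S.V n × S.V n)) (n : ℕ) (j : Fin (d n)) : ℝ :=
  ((c n j).ncard : ℝ)

/-- normalized winding matrix -/
noncomputable def Q (c : ∀ n, Fin (d n) → Set (S.V n × S.V n))
    (M : ∀ n, Fin (d (n + 1)) → Fin (d n) → ℕ) (n : ℕ)
    (i : Fin (d (n + 1))) (j : Fin (d n)) : ℝ :=
  (Per c n j / Per c (n + 1) i) * (M n i j : ℝ)

variable (hcmem : ∀ (n : ℕ) (i : Fin (d n)), c n i ∈ circuitsOf (S.G n))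
variable (hM : ∀ (n : ℕ) (i : Fin (d (n + 1))),
      pushVec (S.φ n) (circVec (c (n + 1) i)) =
        fun e => ∑ j, (M n i j : ℝ) * circVec (c n j) e)

include hcmem in
lemma Per_pos (n : ℕ) (j : Fin (d n)) : 0 < Per c n j := by
  have := ncard_pos_of_circuit (hcmem n j)
  unfold Per
  exact_mod_cast this

include hcmem hM in
lemma Per_succ (n : ℕ) (i : Fin (d (n + 1))) :
    Per c (n + 1) i = ∑ j, (M n i j : ℝ) * Per c n j := by
  have h := congrArg (fun g => ∑ e : S.V n × S.V n, g e) (hM n i)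
  simp only at h
  rw [pushVec_total] at h
  have h2 : Per c (n + 1) i = ∑ e' : S.V (n+1) × S.V (n+1), circVec (c (n + 1) i) e' :=
    (sum_circVec _).symm
  rw [h2, h, Finset.sum_comm]
  apply Finset.sum_congr rfl
  intro j _
  rw [← Finset.mul_sum, sum_circVec]
  rfl

include hcmem hM in
lemma Q_rowsum (n : ℕ) (i : Fin (d (n + 1))) : ∑ j, Q c M n i j = 1 := by
  have hper := Per_pos hcmem (n + 1) i
  have : ∑ j, Q c M n i j = (∑ j, (M n i j : ℝ) * Per c n j) / Per c (n + 1) i := by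
    rw [Finset.sum_div]
    apply Finset.sum_congr rfl
    intro j _
    rw [Q]; ring
  rw [this, ← Per_succ hcmem hM n i, div_self hper.ne']

include hcmem hM in
lemma push_circTilde (n : ℕ) (i : Fin (d (n + 1))) (e : S.V n × S.V n) :
    pushVec (S.φ n) (circTilde (c (n + 1) i)) e = ∑ j, Q c M n i j * circTilde (c n j) e := by
  have h1 : circTilde (c (n + 1) i) = fun e' => (Per c (n+1) i)⁻¹ * circVec (c (n + 1) i) e' := rfl
  rw [h1, pushVec_smul, congrFun (hM n i) e]
  rw [Finset.mul_sum]
  apply Finset.sum_congr rfl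
  intro j _
  have hpj := Per_pos hcmem n j
  have hpi := Per_pos hcmem (n + 1) i
  rw [Q, circTilde]
  show (Per c (n+1) i)⁻¹ * ((M n i j : ℝ) * circVec (c n j) e)
    = (Per c n j / Per c (n+1) i) * (M n i j : ℝ) * ((Per c n j)⁻¹ * circVec (c n j) e)
  field_simp

/-- iterated push over `k` levels -/
noncomputable def pushK (S : CoverSystem) : ∀ (n k : ℕ),
    (S.V (n + k) × S.V (n + k) → ℝ) → (S.V n × S.V n → ℝ)
  | _, 0 => id
  | n, k + 1 => fun y => pushK S n k (pushVec (S.φ (n + k)) y)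

/-- iterated winding-matrix application -/
noncomputable def matDown (c : ∀ n, Fin (d n) → Set (S.V n × S.V n))
    (M : ∀ n, Fin (d (n + 1)) → Fin (d n) → ℕ) : ∀ (n k : ℕ),
    (Fin (d (n + k)) → ℝ) → (Fin (d n) → ℝ)
  | _, 0 => id
  | n, k + 1 => fun t => matDown c M n k (fun j => ∑ i, t i * Q c M (n + k) i j)

lemma muVec_pushK (hf : S.IsLimitMap f) (μ : Measure S.X) [IsProbabilityMeasure μ]
    (n k : ℕ) : S.muVec f μ n = pushK S n k (S.muVec f μ (n + k)) := by
  induction k with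
  | zero => rfl
  | succ k ih =>
    rw [ih]
    show _ = pushK S n k (pushVec (S.φ (n + k)) (S.muVec f μ (n + k + 1)))
    rw [← muVec_push hf μ (n + k)]

include hcmem hM in
lemma pushK_comb (n k : ℕ) (t : Fin (d (n + k)) → ℝ) :
    pushK S n k (fun e => ∑ i, t i * circTilde (c (n + k) i) e)
      = fun e => ∑ j, matDown c M n k t j * circTilde (c n j) e := by
  induction k with
  | zero => rfl
  | succ k ih =>
    have hstep : pushVec (S.φ (n + k))
          (fun e => ∑ i : Fin (d (n + k + 1)), t i * circTilde (c (n + k + 1) i) e)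
        = fun e => ∑ j, (∑ i : Fin (d (n + k + 1)), t i * Q c M (n + k) i j)
            * circTilde (c (n + k) j) e := by
      funext e
      rw [pushVec_sum]
      calc (∑ i : Fin (d (n + k + 1)),
              pushVec (S.φ (n + k)) (fun e' => t i * circTilde (c (n + k + 1) i) e') e)
          = ∑ i : Fin (d (n + k + 1)), ∑ j, t i * Q c M (n + k) i j * circTilde (c (n + k) j) e :=
            Finset.sum_congr rfl (fun i _ => by
              rw [pushVec_smul, push_circTilde hcmem hM (n + k) i e, Finset.mul_sum]
              exact Finset.sum_congr rfl (fun j _ => (mul_assoc _ _ _).symm))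
        _ = ∑ j, (∑ i : Fin (d (n + k + 1)), t i * Q c M (n + k) i j)
              * circTilde (c (n + k) j) e := by
            rw [Finset.sum_comm]
            exact Finset.sum_congr rfl (fun j _ => (Finset.sum_mul _ _ _).symm)
    show pushK S n k (pushVec (S.φ (n + k))
      (fun e => ∑ i : Fin (d (n + k + 1)), t i * circTilde (c (n + k + 1) i) e)) = _
    rw [hstep]
    exact ih _

include hcmem hM in
lemma matDown_sum (n k : ℕ) (t : Fin (d (n + k)) → ℝ) :
    ∑ j, matDown c M n k t j = ∑ i, t i := by
  induction k with
  | zero => rfl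
  | succ k ih =>
    show ∑ j, matDown c M n k _ j = _
    rw [ih]
    rw [Finset.sum_comm]
    apply Finset.sum_congr rfl
    intro i _
    rw [← Finset.mul_sum, Q_rowsum hcmem hM, mul_one]

variable (hε : ∀ n, 0 < ε n)
variable (hεM : ∀ (n : ℕ) (i : Fin (d (n + 1))) (j : Fin (d n)),
      ε n ≤ (((c n j).ncard : ℝ) / ((c (n + 1) i).ncard : ℝ)) * (M n i j : ℝ))

include hεM in
lemma eps_le_Q (n : ℕ) (i : Fin (d (n + 1))) (j : Fin (d n)) : ε n ≤ Q c M n i j := hεM n i j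

include hcmem hM hεM in
lemma contraction_step (hd : ∀ m, 0 < d m) (m : ℕ) (s t : Fin (d (m + 1)) → ℝ)
    (hsum : ∑ i, s i = ∑ i, t i) :
    ∑ j, |∑ i, s i * Q c M m i j - ∑ i, t i * Q c M m i j|
      ≤ (1 - (d m : ℝ) * ε m) * ∑ i, |s i - t i| := by
  have hQ : ∀ i j, ε m ≤ Q c M m i j := eps_le_Q hεM m
  have key : ∀ j, ∑ i, s i * Q c M m i j - ∑ i, t i * Q c M m i j
      = ∑ i, (s i - t i) * (Q c M m i j - ε m) := by
    intro j
    have h3 : ∑ i, (s i - t i) * (Q c M m i j - ε m)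
        = ∑ i, (s i * Q c M m i j - t i * Q c M m i j - (s i * ε m - t i * ε m)) :=
      Finset.sum_congr rfl (fun i _ => by ring)
    rw [h3, Finset.sum_sub_distrib, Finset.sum_sub_distrib, Finset.sum_sub_distrib,
      ← Finset.sum_mul, ← Finset.sum_mul, hsum, sub_self, sub_zero]
  calc ∑ j, |∑ i, s i * Q c M m i j - ∑ i, t i * Q c M m i j|
      ≤ ∑ j, ∑ i, |s i - t i| * (Q c M m i j - ε m) := by
        apply Finset.sum_le_sum
        intro j _
        rw [key j]
        refine (Finset.abs_sum_le_sum_abs _ _).trans ?_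
        apply Finset.sum_le_sum
        intro i _
        rw [abs_mul, abs_of_nonneg (sub_nonneg.2 (hQ i j))]
    _ = ∑ i, |s i - t i| * (1 - (d m : ℝ) * ε m) := by
        rw [Finset.sum_comm]
        apply Finset.sum_congr rfl
        intro i _
        rw [← Finset.mul_sum, Finset.sum_sub_distrib, Q_rowsum hcmem hM]
        simp [Finset.card_univ]
    _ = (1 - (d m : ℝ) * ε m) * ∑ i, |s i - t i| := by
        rw [← Finset.sum_mul, mul_comm]

include hcmem hM hε hεM in
lemma one_sub_nonneg (hd : ∀ m, 0 < d m) (m : ℕ) : 0 ≤ 1 - (d m : ℝ) * ε m := by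
  obtain ⟨i⟩ : Nonempty (Fin (d (m + 1))) := ⟨⟨0, hd (m + 1)⟩⟩
  have h1 : (d m : ℝ) * ε m ≤ ∑ j, Q c M m i j := by
    have : ∀ j ∈ Finset.univ, ε m ≤ Q c M m i j := fun j _ => eps_le_Q hεM m i j
    calc (d m : ℝ) * ε m = ∑ _j : Fin (d m), ε m := by
          simp [Finset.card_univ]
      _ ≤ ∑ j, Q c M m i j := Finset.sum_le_sum this
  rw [Q_rowsum hcmem hM] at h1
  linarith

include hcmem hM hε hεM in
lemma contraction (hd : ∀ m, 0 < d m) (n k : ℕ) (s t : Fin (d (n + k)) → ℝ)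
    (hsum : ∑ i, s i = ∑ i, t i) :
    ∑ j, |matDown c M n k s j - matDown c M n k t j|
      ≤ (∏ i ∈ Finset.Ico n (n + k), (1 - (d i : ℝ) * ε i)) * ∑ i, |s i - t i| := by
  induction k with
  | zero => simp [matDown]
  | succ k ih =>
    have hprodnn : 0 ≤ ∏ i ∈ Finset.Ico n (n + k), (1 - (d i : ℝ) * ε i) :=
      Finset.prod_nonneg (fun i _ => one_sub_nonneg hcmem hM hε hεM hd i)
    have hsum' : ∑ j, (fun j => ∑ i, s i * Q c M (n + k) i j) j
        = ∑ j, (fun j => ∑ i, t i * Q c M (n + k) i j) j := by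
      simp only
      rw [Finset.sum_comm, Finset.sum_comm (f := fun j i => t i * Q c M (n + k) i j)]
      rw [Finset.sum_congr rfl (fun i (_ : i ∈ Finset.univ) =>
        (by rw [← Finset.mul_sum, Q_rowsum hcmem hM] :
          ∑ j, s i * Q c M (n + k) i j = s i * 1))]
      rw [Finset.sum_congr rfl (fun i (_ : i ∈ Finset.univ) =>
        (by rw [← Finset.mul_sum, Q_rowsum hcmem hM] :
          ∑ j, t i * Q c M (n + k) i j = t i * 1))]
      simpa using hsum
    have hstep := contraction_step hcmem hM hεM hd (n + k) s t hsum
    calc ∑ j, |matDown c M n k (fun j => ∑ i, s i * Q c M (n + k) i j) j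
            - matDown c M n k (fun j => ∑ i, t i * Q c M (n + k) i j) j|
        ≤ (∏ i ∈ Finset.Ico n (n + k), (1 - (d i : ℝ) * ε i))
            * ∑ j, |∑ i, s i * Q c M (n + k) i j - ∑ i, t i * Q c M (n + k) i j| :=
          ih _ _ hsum'
      _ ≤ (∏ i ∈ Finset.Ico n (n + k), (1 - (d i : ℝ) * ε i))
            * ((1 - (d (n + k) : ℝ) * ε (n + k)) * ∑ i, |s i - t i|) :=
          mul_le_mul_of_nonneg_left hstep hprodnn
      _ = (∏ i ∈ Finset.Ico n (n + k + 1), (1 - (d i : ℝ) * ε i)) * ∑ i, |s i - t i| := by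
          rw [Finset.prod_Ico_succ_top (Nat.le_add_right n k)]
          ring

end Contraction
end UEProof
namespace UEProof
open Set MeasureTheory Filter
open scoped Classical

section Uniqueness

variable {S : CoverSystem} {f : S.X → S.X}
variable {d : ℕ → ℕ} {c : ∀ n, Fin (d n) → Set (S.V n × S.V n)}
variable {M : ∀ n, Fin (d (n + 1)) → Fin (d n) → ℕ} {ε : ℕ → ℝ}

/-- sum of the coefficients in an expression of `muVec` is `1` -/
lemma st_sum_one (hf : S.IsLimitMap f) (hcmem : ∀ (n : ℕ) (i : Fin (d n)), c n i ∈ circuitsOf (S.G n))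
    (μ : Measure S.X) [IsProbabilityMeasure μ] (m : ℕ) (st : Fin (d m) → ℝ)
    (hst : ∀ e, S.muVec f μ m e = ∑ i, st i * circTilde (c m i) e) :
    ∑ i, st i = 1 := by
  have h1 := muVec_total hf μ m
  rw [Finset.sum_congr rfl (fun e (_ : e ∈ Finset.univ) => hst e), Finset.sum_comm] at h1
  rw [← h1]
  apply Finset.sum_congr rfl
  intro i _
  rw [← Finset.mul_sum, sum_circTilde (hcmem m i), mul_one]

lemma muVec_expr (hf : S.IsLimitMap f)
    (hcmem : ∀ (n : ℕ) (i : Fin (d n)), c n i ∈ circuitsOf (S.G n))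
    (hM : ∀ (n : ℕ) (i : Fin (d (n + 1))),
      pushVec (S.φ n) (circVec (c (n + 1) i)) =
        fun e => ∑ j, (M n i j : ℝ) * circVec (c n j) e)
    (μ : Measure S.X) [IsProbabilityMeasure μ] (n k : ℕ) (st : Fin (d (n + k)) → ℝ)
    (hst : ∀ e, S.muVec f μ (n + k) e = ∑ i, st i * circTilde (c (n + k) i) e) :
    ∀ e, S.muVec f μ n e = ∑ j, matDown c M n k st j * circTilde (c n j) e := by
  intro e
  have h0 : S.muVec f μ (n + k) = fun e => ∑ i, st i * circTilde (c (n + k) i) e :=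
    funext hst
  rw [muVec_pushK hf μ n k, h0, pushK_comb hcmem hM n k st]

theorem muVec_unique (hf : S.IsLimitMap f)
    (hcmem : ∀ (n : ℕ) (i : Fin (d n)), c n i ∈ circuitsOf (S.G n))
    (hM : ∀ (n : ℕ) (i : Fin (d (n + 1))),
      pushVec (S.φ n) (circVec (c (n + 1) i)) =
        fun e => ∑ j, (M n i j : ℝ) * circVec (c n j) e)
    (hε : ∀ n, 0 < ε n)
    (hεM : ∀ (n : ℕ) (i : Fin (d (n + 1))) (j : Fin (d n)),
      ε n ≤ (((c n j).ncard : ℝ) / ((c (n + 1) i).ncard : ℝ)) * (M n i j : ℝ))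
    (hprod : ∀ n : ℕ, Filter.Tendsto
      (fun K : ℕ => ∏ i ∈ Finset.Ico n K, (1 - (d i : ℝ) * ε i))
      Filter.atTop (nhds 0))
    (hd : ∀ m, 0 < d m)
    (μ ν : Measure S.X) [IsProbabilityMeasure μ] [IsProbabilityMeasure ν]
    (hCμ : ∀ m : ℕ, ∃ st : Fin (d m) → ℝ, (∀ i, 0 ≤ st i) ∧
        ∀ e, S.muVec f μ m e = ∑ i, st i * circTilde (c m i) e)
    (hCν : ∀ m : ℕ, ∃ st : Fin (d m) → ℝ, (∀ i, 0 ≤ st i) ∧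
        ∀ e, S.muVec f ν m e = ∑ i, st i * circTilde (c m i) e)
    (n : ℕ) : S.muVec f μ n = S.muVec f ν n := by
  funext e
  have key : ∀ k : ℕ, |S.muVec f μ n e - S.muVec f ν n e|
      ≤ (∏ i ∈ Finset.Ico n (n + k), (1 - (d i : ℝ) * ε i)) * 2 := by
    intro k
    obtain ⟨sμ, hsμ0, hsμ⟩ := hCμ (n + k)
    obtain ⟨sν, hsν0, hsν⟩ := hCν (n + k)
    have hμe := muVec_expr hf hcmem hM μ n k sμ hsμ e
    have hνe := muVec_expr hf hcmem hM ν n k sν hsν e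
    have hsums : ∑ i, sμ i = ∑ i, sν i := by
      rw [st_sum_one hf hcmem μ (n + k) sμ hsμ, st_sum_one hf hcmem ν (n + k) sν hsν]
    have hcontr := contraction hcmem hM hε hεM hd n k sμ sν hsums
    have habs : |S.muVec f μ n e - S.muVec f ν n e|
        ≤ ∑ j, |matDown c M n k sμ j - matDown c M n k sν j| := by
      rw [hμe, hνe, ← Finset.sum_sub_distrib]
      refine (Finset.abs_sum_le_sum_abs _ _).trans ?_
      apply Finset.sum_le_sum
      intro j _
      rw [show matDown c M n k sμ j * circTilde (c n j) e
          - matDown c M n k sν j * circTilde (c n j) e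
          = (matDown c M n k sμ j - matDown c M n k sν j) * circTilde (c n j) e by ring]
      rw [abs_mul]
      calc |matDown c M n k sμ j - matDown c M n k sν j| * |circTilde (c n j) e|
          ≤ |matDown c M n k sμ j - matDown c M n k sν j| * 1 := by
            apply mul_le_mul_of_nonneg_left _ (abs_nonneg _)
            rw [abs_of_nonneg (circTilde_nonneg (hcmem n j) e)]
            exact circTilde_le_one (hcmem n j) e
        _ = _ := mul_one _
    have hdiff2 : ∑ i, |sμ i - sν i| ≤ 2 := by
      calc ∑ i, |sμ i - sν i| ≤ ∑ i, (sμ i + sν i) := by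
            apply Finset.sum_le_sum
            intro i _
            refine (abs_sub _ _).trans ?_
            rw [abs_of_nonneg (hsμ0 i), abs_of_nonneg (hsν0 i)]
        _ = 2 := by
            rw [Finset.sum_add_distrib, st_sum_one hf hcmem μ (n + k) sμ hsμ,
              st_sum_one hf hcmem ν (n + k) sν hsν]
            norm_num
    have hprodnn : 0 ≤ ∏ i ∈ Finset.Ico n (n + k), (1 - (d i : ℝ) * ε i) :=
      Finset.prod_nonneg (fun i _ => one_sub_nonneg hcmem hM hε hεM hd i)
    calc |S.muVec f μ n e - S.muVec f ν n e|
        ≤ ∑ j, |matDown c M n k sμ j - matDown c M n k sν j| := habs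
      _ ≤ (∏ i ∈ Finset.Ico n (n + k), (1 - (d i : ℝ) * ε i)) * ∑ i, |sμ i - sν i| := hcontr
      _ ≤ (∏ i ∈ Finset.Ico n (n + k), (1 - (d i : ℝ) * ε i)) * 2 :=
          mul_le_mul_of_nonneg_left hdiff2 hprodnn
  have hcomp : Filter.Tendsto (fun k : ℕ => n + k) Filter.atTop Filter.atTop := by
    simpa [Nat.add_comm] using Filter.tendsto_add_atTop_nat n
  have hto : Filter.Tendsto
      (fun k : ℕ => (∏ i ∈ Finset.Ico n (n + k), (1 - (d i : ℝ) * ε i)) * 2)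
      Filter.atTop (nhds 0) := by
    have := ((hprod n).comp hcomp).mul_const 2
    simpa using this
  have hle : |S.muVec f μ n e - S.muVec f ν n e| ≤ 0 := ge_of_tendsto' hto key
  have := abs_nonpos_iff.mp hle
  linarith [this]

end Uniqueness
end UEProof
namespace UEProof
open Set MeasureTheory Filter Topology
open scoped Classical

variable {S : CoverSystem}

/-- push a vector at level `m` down to all levels (zero above `m`). -/
noncomputable def pushFrom (S : CoverSystem) (m : ℕ) (y : S.V m × S.V m → ℝ) (n : ℕ) :
    S.V n × S.V n → ℝ :=
  if h : n = m then cast (congrArg (fun k => S.V k × S.V k → ℝ) h.symm) y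
  else if h2 : n < m then pushVec (S.φ n) (pushFrom S m y (n + 1)) else 0
termination_by m - n
decreasing_by omega

lemma pushFrom_self (m : ℕ) (y : S.V m × S.V m → ℝ) : pushFrom S m y m = y := by
  rw [pushFrom]
  simp

lemma pushFrom_lt {m n : ℕ} (h : n < m) (y : S.V m × S.V m → ℝ) :
    pushFrom S m y n = pushVec (S.φ n) (pushFrom S m y (n + 1)) := by
  rw [pushFrom, dif_neg (Nat.ne_of_lt h), dif_pos h]

lemma pushFrom_gt {m n : ℕ} (h : m < n) (y : S.V m × S.V m → ℝ) :
    pushFrom S m y n = 0 := by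
  rw [pushFrom, dif_neg (by omega), dif_neg (by omega)]

lemma pushFrom_memP {m : ℕ} {y : S.V m × S.V m → ℝ} (hy : MemP (S.G m) y) :
    ∀ n, n ≤ m → MemP (S.G n) (pushFrom S m y n) := by
  suffices h : ∀ j n, n + j = m → MemP (S.G n) (pushFrom S m y n) by
    intro n hn
    obtain ⟨j, hj⟩ := Nat.le.dest hn
    exact h j n hj
  intro j
  induction j with
  | zero =>
    intro n hn
    simp only [Nat.add_zero] at hn
    subst hn
    rw [pushFrom_self]
    exact hy
  | succ j ih =>
    intro n hn
    have hlt : n < m := by omega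
    rw [pushFrom_lt hlt]
    exact pushVec_memP (S.cover n).hom (ih (n + 1) (by omega))

/-- entries of a `MemP` element lie in `[0,1]` -/
lemma memP_mem_Icc {V : Type} [Fintype V] {G : DirGraph V} {a : V × V → ℝ}
    (ha : MemP G a) (e : V × V) : a e ∈ Set.Icc (0 : ℝ) 1 := by
  refine ⟨ha.1.1.1 e, ?_⟩
  have := Finset.single_le_sum (f := a) (fun e' _ => ha.1.1.1 e') (Finset.mem_univ e)
  rw [ha.2] at this
  exact this

/-- existence of a compatible family of flows -/
lemma exists_flow_family {d : ℕ → ℕ} {c : ∀ n, Fin (d n) → Set (S.V n × S.V n)}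
    (hcmem : ∀ (n : ℕ) (i : Fin (d n)), c n i ∈ circuitsOf (S.G n))
    (hd' : ∀ k : ℕ, ∃ m, k ≤ m ∧ 0 < d m) :
    ∃ a : ∀ n, S.V n × S.V n → ℝ, (∀ n, MemP (S.G n) (a n)) ∧
      ∀ n, a n = pushVec (S.φ n) (a (n + 1)) := by
  -- approximants
  have hchoice : ∀ k : ℕ, ∃ m, k + 1 ≤ m ∧ 0 < d m := fun k => hd' (k + 1)
  choose m hm hdm using hchoice
  let y : ℕ → ∀ n, S.V n × S.V n → ℝ := fun k =>
    pushFrom S (m k) (circTilde (c (m k) ⟨0, hdm k⟩))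
  have hyP : ∀ k n, n ≤ m k → MemP (S.G n) (y k n) := fun k n hn =>
    pushFrom_memP (memP_circTilde (hcmem (m k) _)) n hn
  have hycompat : ∀ k n, n < m k → y k n = pushVec (S.φ n) (y k (n + 1)) := fun k n hn =>
    pushFrom_lt hn _
  -- the compact box
  let K : Set (∀ n, S.V n × S.V n → ℝ) :=
    Set.univ.pi (fun n => Set.univ.pi (fun _ : S.V n × S.V n => Set.Icc (0 : ℝ) 1))
  have hKc : IsCompact K :=
    isCompact_univ_pi (fun n => isCompact_univ_pi (fun _ => isCompact_Icc))
  have hyK : ∀ k, y k ∈ K := by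
    intro k
    intro n _
    intro e _
    rcases le_or_gt n (m k) with h | h
    · exact memP_mem_Icc (hyP k n h) e
    · show y k n e ∈ _
      have : y k n = 0 := pushFrom_gt h _
      rw [this]
      simp
  -- a cluster point
  have hF : (Filter.map y Filter.atTop) ≤ Filter.principal K := by
    rw [Filter.le_principal_iff, Filter.mem_map]
    exact Filter.Eventually.of_forall hyK
  obtain ⟨x, -, hx⟩ := hKc.exists_clusterPt hF
  -- closed conditions
  have hmem_closed : ∀ (n : ℕ) (Cn : Set (∀ n, S.V n × S.V n → ℝ)), IsClosed Cn →
      (∀ᶠ k in Filter.atTop, y k ∈ Cn) → x ∈ Cn := by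
    intro n Cn hCc hev
    have hCn : Cn ∈ Filter.map y Filter.atTop := hev
    have h1 : ClusterPt x (Filter.principal Cn) := by
      refine ClusterPt.mono hx ?_
      exact Filter.le_principal_iff.2 hCn
    exact hCc.closure_eq ▸ mem_closure_iff_clusterPt.2 h1
  have hcont : ∀ (n : ℕ) (e : S.V n × S.V n),
      Continuous (fun x : ∀ n', S.V n' × S.V n' → ℝ => x n e) := fun n e =>
    (continuous_apply e).comp (continuous_apply n)
  refine ⟨x, fun n => ?_, fun n => ?_⟩
  · -- MemP at level n
    have hC : IsClosed {x : ∀ n', S.V n' × S.V n' → ℝ | MemP (S.G n) (x n)} := by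
      have hdecomp : {x : ∀ n', S.V n' × S.V n' → ℝ | MemP (S.G n) (x n)}
          = ((⋂ e, {x : ∀ n', S.V n' × S.V n' → ℝ | 0 ≤ x n e})
              ∩ (⋂ e, ⋂ _ : e ∉ (S.G n).E, {x : ∀ n', S.V n' × S.V n' → ℝ | x n e = 0}))
            ∩ ((⋂ v, {x : ∀ n', S.V n' × S.V n' → ℝ | (∑ u, x n (u, v)) = ∑ u, x n (v, u)})
              ∩ {x : ∀ n', S.V n' × S.V n' → ℝ | (∑ e, x n e) = 1}) := by
        ext x'
        simp only [Set.mem_setOf_eq, Set.mem_inter_iff, Set.mem_iInter, MemP, MemI, MemM]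
        tauto
      rw [hdecomp]
      refine IsClosed.inter (IsClosed.inter ?_ ?_) (IsClosed.inter ?_ ?_)
      · exact isClosed_iInter (fun e => isClosed_le continuous_const (hcont n e))
      · exact isClosed_iInter (fun e => isClosed_iInter (fun _ =>
          isClosed_eq (hcont n e) continuous_const))
      · exact isClosed_iInter (fun v => isClosed_eq
          (continuous_finset_sum _ (fun u _ => hcont n (u, v)))
          (continuous_finset_sum _ (fun u _ => hcont n (v, u))))
      · exact isClosed_eq (continuous_finset_sum _ (fun e _ => hcont n e)) continuous_const
    exact hmem_closed n _ hC (by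
      filter_upwards [Filter.eventually_ge_atTop n] with k hk
      exact hyP k n (le_trans (by omega) (hm k)))
  · -- compatibility at level n
    have hC : IsClosed {x : ∀ n', S.V n' × S.V n' → ℝ |
        x n = pushVec (S.φ n) (x (n + 1))} := by
      have : {x : ∀ n', S.V n' × S.V n' → ℝ | x n = pushVec (S.φ n) (x (n + 1))}
          = ⋂ e, {x | x n e = ∑ e' ∈ Finset.univ.filter
              (fun e' => edgeMap (S.φ n) e' = e), x (n + 1) e'} := by
        ext x'
        simp only [Set.mem_iInter, Set.mem_setOf_eq]
        constructor
        · intro h e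
          rw [h, pushVec_eq_sum]
        · intro h
          funext e
          rw [pushVec_eq_sum]
          exact h e
      rw [this]
      refine isClosed_iInter (fun e => isClosed_eq (hcont n e) ?_)
      exact continuous_finset_sum _ (fun e' _ => hcont (n + 1) e')
    exact hmem_closed n _ hC (by
      filter_upwards [Filter.eventually_ge_atTop n] with k hk
      exact hycompat k n (lt_of_lt_of_le (by omega) (hm k)))

end UEProof
namespace UEProof
open Set
open scoped Classical

section Tiling

variable {ι : Type} [Fintype ι] (rk : ι → ℕ) (m : ι → ℝ) (C : Finset ι)

/-- left endpoint offset of `w` in the prefix-sum layout of `C` -/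
noncomputable def startOf (w : ι) : ℝ := ∑ w' ∈ C.filter (fun w' => rk w' < rk w), m w'

variable (hinj : Function.Injective rk)

include hinj in
lemma three_split {w : ι} (hw : w ∈ C) :
    ∑ w' ∈ C, m w' = startOf rk m C w + m w
      + ∑ w' ∈ C.filter (fun w' => rk w < rk w'), m w' := by
  have h1 := Finset.sum_filter_add_sum_filter_not C (fun w' => rk w' < rk w) m
  have h2 := Finset.sum_filter_add_sum_filter_not
    (C.filter (fun w' => ¬ rk w' < rk w)) (fun w' => rk w' = rk w) m
  rw [Finset.filter_filter, Finset.filter_filter] at h2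
  have e1 : C.filter (fun w' => ¬ rk w' < rk w ∧ rk w' = rk w) = {w} := by
    ext w'
    simp only [Finset.mem_filter, Finset.mem_singleton]
    constructor
    · rintro ⟨_, _, h⟩
      exact hinj h
    · rintro rfl
      exact ⟨hw, by omega, rfl⟩
  have e2 : C.filter (fun w' => ¬ rk w' < rk w ∧ ¬ rk w' = rk w)
      = C.filter (fun w' => rk w < rk w') := by
    apply Finset.filter_congr
    intro w' _
    constructor
    · rintro ⟨h1', h2'⟩; omega
    · intro h; omega
  rw [e1, e2, Finset.sum_singleton] at h2
  rw [← h1, ← h2, startOf]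
  ring

include hinj in
lemma startOf_add_le {w w' : ι} (hw : w ∈ C) (hw' : w' ∈ C)
    (hm : ∀ u ∈ C, 0 ≤ m u) (hlt : rk w < rk w') :
    startOf rk m C w + m w ≤ startOf rk m C w' := by
  have key := three_split rk m (C.filter (fun u => rk u < rk w')) hinj
    (w := w) (by simp [Finset.mem_filter, hw, hlt])
  have e0 : startOf rk m C w' = ∑ u ∈ C.filter (fun u => rk u < rk w'), m u := rfl
  have e1 : startOf rk m (C.filter (fun u => rk u < rk w')) w = startOf rk m C w := by
    rw [startOf, startOf, Finset.filter_filter]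
    apply Finset.sum_congr _ (fun _ _ => rfl)
    apply Finset.filter_congr
    intro u _
    constructor
    · rintro ⟨_, h⟩; exact h
    · intro h; exact ⟨by omega, h⟩
  rw [e0, key, e1]
  have : 0 ≤ ∑ u ∈ (C.filter (fun u => rk u < rk w')).filter (fun u => rk w < rk u), m u := by
    apply Finset.sum_nonneg
    intro u hu
    simp only [Finset.mem_filter] at hu
    exact hm u hu.1.1
  linarith

include hinj in
lemma tile_exists (hm : ∀ u ∈ C, 0 ≤ m u) {t : ℝ} (ht0 : 0 ≤ t)
    (ht1 : t < ∑ u ∈ C, m u) :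
    ∃ w ∈ C, startOf rk m C w ≤ t ∧ t < startOf rk m C w + m w := by
  have hCne : C.Nonempty := by
    by_contra h
    rw [Finset.not_nonempty_iff_eq_empty] at h
    rw [h, Finset.sum_empty] at ht1
    linarith
  -- the set of candidates with start ≤ t
  have hA : ∃ w ∈ C, startOf rk m C w ≤ t := by
    obtain ⟨w0, hw0, hmin⟩ := C.exists_min_image rk hCne
    refine ⟨w0, hw0, ?_⟩
    have : C.filter (fun w' => rk w' < rk w0) = ∅ := by
      rw [Finset.filter_eq_empty_iff]
      intro u hu
      have := hmin u hu
      omega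
    rw [startOf, this, Finset.sum_empty]
    exact ht0
  set A := C.filter (fun w => startOf rk m C w ≤ t) with hAdef
  have hAne : A.Nonempty := by
    obtain ⟨w, hw, hle⟩ := hA
    exact ⟨w, by simp [hAdef, hw, hle]⟩
  obtain ⟨w, hwA, hmax⟩ := A.exists_max_image rk hAne
  have hwC : w ∈ C := (Finset.mem_filter.1 hwA).1
  have hwle : startOf rk m C w ≤ t := (Finset.mem_filter.1 hwA).2
  refine ⟨w, hwC, hwle, ?_⟩
  by_contra hcon
  push_neg at hcon
  -- all elements with bigger rank
  set B := C.filter (fun w' => rk w < rk w') with hBdef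
  rcases B.eq_empty_or_nonempty with hBe | hBne
  · have := three_split rk m C hinj hwC
    rw [← hBdef, hBe, Finset.sum_empty, add_zero] at this
    rw [this] at ht1
    linarith
  · obtain ⟨w1, hw1B, hmin1⟩ := B.exists_min_image rk hBne
    have hw1C : w1 ∈ C := (Finset.mem_filter.1 hw1B).1
    have hw1r : rk w < rk w1 := (Finset.mem_filter.1 hw1B).2
    -- startOf w1 = startOf w + m w + (middle sum) with middle empty
    have key := three_split rk m (C.filter (fun u => rk u < rk w1)) hinj
      (w := w) (by simp [Finset.mem_filter, hwC, hw1r])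
    have e1 : startOf rk m (C.filter (fun u => rk u < rk w1)) w = startOf rk m C w := by
      rw [startOf, startOf, Finset.filter_filter]
      apply Finset.sum_congr _ (fun _ _ => rfl)
      apply Finset.filter_congr
      intro u _
      constructor
      · rintro ⟨_, h⟩; exact h
      · intro h; exact ⟨by omega, h⟩
    have e2 : (C.filter (fun u => rk u < rk w1)).filter (fun u => rk w < rk u) = ∅ := by
      rw [Finset.filter_eq_empty_iff]
      intro u hu
      simp only [Finset.mem_filter] at hu
      intro hcon2
      have huB : u ∈ B := by simp [hBdef, hu.1, hcon2]
      have := hmin1 u huB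
      omega
    rw [e1, e2, Finset.sum_empty, add_zero] at key
    -- so startOf w1 = startOf w + m w ≤ t, contradicting maximality
    have hw1start : startOf rk m C w1 = startOf rk m C w + m w := by
      rw [startOf]; rw [key]
    have hw1A : w1 ∈ A := by
      simp only [hAdef, Finset.mem_filter]
      exact ⟨hw1C, by rw [hw1start]; linarith⟩
    have := hmax w1 hw1A
    omega

end Tiling
end UEProof
namespace UEProof
open Set MeasureTheory
open scoped Classical

variable {S : CoverSystem}

/-- vertex mass of a flow family -/
noncomputable def bmass (a : ∀ n, S.V n × S.V n → ℝ) (n : ℕ) (v : S.V n) : ℝ :=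
  ∑ u, a n (v, u)

/-- a rank function on the vertices -/
noncomputable def rkV (S : CoverSystem) (n : ℕ) (v : S.V n) : ℕ :=
  ((Fintype.equivFin (S.V n)) v : ℕ)

lemma rkV_inj (n : ℕ) : Function.Injective (rkV S n) := by
  intro v w h
  have := Fin.val_injective h
  exact (Fintype.equivFin (S.V n)).injective this

/-- left endpoints of the nested interval family -/
noncomputable def LV (a : ∀ n, S.V n × S.V n → ℝ) : ∀ n, S.V n → ℝ
  | 0 => fun _ => 0
  | n + 1 => fun w => LV a n (S.φ n w)
      + startOf (rkV S (n + 1)) (bmass a (n + 1))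
          (Finset.univ.filter (fun w' => S.φ n w' = S.φ n w)) w

section FlowFamily

variable {a : ∀ n, S.V n × S.V n → ℝ}
  (haP : ∀ n, MemP (S.G n) (a n))
  (haC : ∀ n, a n = pushVec (S.φ n) (a (n + 1)))

include haP in
lemma bmass_nonneg (n : ℕ) (v : S.V n) : 0 ≤ bmass a n v :=
  Finset.sum_nonneg (fun u _ => (haP n).1.1.1 (v, u))

include haP in
lemma bmass_total (n : ℕ) : ∑ v, bmass a n v = 1 := by
  have := (haP n).2
  rw [← this, Fintype.sum_prod_type]
  rfl

include haP haC in
lemma childSum (n : ℕ) (v : S.V n) :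
    ∑ w ∈ Finset.univ.filter (fun w : S.V (n + 1) => S.φ n w = v), bmass a (n + 1) w
      = bmass a n v := by
  rw [bmass, Finset.sum_congr rfl (fun u (_ : u ∈ Finset.univ) => by
    rw [haC n] : ∀ u ∈ Finset.univ, a n (v, u) = pushVec (S.φ n) (a (n + 1)) (v, u))]
  rw [pushVec_fst_fiber, sum_ite_prod_fst]
  rfl

include haP in
lemma nonempty_V0 : Nonempty (S.V 0) := by
  by_contra h
  have : IsEmpty (S.V 0) := not_nonempty_iff.1 h
  have h2 := (haP 0).2
  rw [Finset.univ_eq_empty, Finset.sum_empty] at h2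
  exact zero_ne_one h2

include haP in
lemma bmass_zero (v : S.V 0) : bmass a 0 v = 1 := by
  have h := bmass_total haP 0
  have huniv : (Finset.univ : Finset (S.V 0)) = {v} := by
    ext w
    simp [S.V0_single w v]
  rw [huniv, Finset.sum_singleton] at h
  exact h

include haP haC in
lemma child_within (n : ℕ) (w : S.V (n + 1)) :
    LV a n (S.φ n w) ≤ LV a (n + 1) w ∧
    LV a (n + 1) w + bmass a (n + 1) w ≤ LV a n (S.φ n w) + bmass a n (S.φ n w) := by
  set C := Finset.univ.filter (fun w' : S.V (n + 1) => S.φ n w' = S.φ n w) with hC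
  have hwC : w ∈ C := by simp [hC]
  have hnn : ∀ u ∈ C, 0 ≤ bmass a (n + 1) u := fun u _ => bmass_nonneg haP (n + 1) u
  constructor
  · show LV a n (S.φ n w) ≤ LV a n (S.φ n w) + _
    have : 0 ≤ startOf (rkV S (n + 1)) (bmass a (n + 1)) C w := by
      apply Finset.sum_nonneg
      intro u hu
      exact hnn u (Finset.mem_filter.1 hu).1
    linarith
  · show LV a n (S.φ n w) + _ + _ ≤ _
    have hsplit := three_split (rkV S (n + 1)) (bmass a (n + 1)) C (rkV_inj (n + 1)) hwC
    have hcs : ∑ w' ∈ C, bmass a (n + 1) w' = bmass a n (S.φ n w) := childSum haP haC n (S.φ n w)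
    have hrest : 0 ≤ ∑ w' ∈ C.filter (fun w' => rkV S (n + 1) w < rkV S (n + 1) w'),
        bmass a (n + 1) w' := by
      apply Finset.sum_nonneg
      intro u hu
      exact hnn u (Finset.mem_filter.1 hu).1
    linarith

include haP haC in
lemma level_disj : ∀ (n : ℕ) (v v' : S.V n) (t : ℝ),
    t ∈ Set.Ico (LV a n v) (LV a n v + bmass a n v) →
    t ∈ Set.Ico (LV a n v') (LV a n v' + bmass a n v') → v = v' := by
  intro n
  induction n with
  | zero => intro v v' _ _ _; exact S.V0_single v v'
  | succ n ih =>
    intro v v' t ht ht'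
    have hpar : S.φ n v = S.φ n v' := by
      apply ih (S.φ n v) (S.φ n v') t
      · obtain ⟨h1, h2⟩ := child_within haP haC n v
        exact ⟨le_trans h1 ht.1, lt_of_lt_of_le ht.2 h2⟩
      · obtain ⟨h1, h2⟩ := child_within haP haC n v'
        exact ⟨le_trans h1 ht'.1, lt_of_lt_of_le ht'.2 h2⟩
    by_contra hne
    set C := Finset.univ.filter (fun w' : S.V (n + 1) => S.φ n w' = S.φ n v) with hCd
    have hvC : v ∈ C := by simp [hCd]
    have hv'C : v' ∈ C := by simp [hCd, hpar]
    have hCv' : Finset.univ.filter (fun w' : S.V (n + 1) => S.φ n w' = S.φ n v') = C := by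
      rw [hCd, hpar]
    have hnn : ∀ u ∈ C, 0 ≤ bmass a (n + 1) u := fun u _ => bmass_nonneg haP (n + 1) u
    have hrk : rkV S (n + 1) v ≠ rkV S (n + 1) v' := fun h => hne (rkV_inj (n + 1) h)
    have hL : LV a (n + 1) v = LV a n (S.φ n v)
        + startOf (rkV S (n + 1)) (bmass a (n + 1)) C v := rfl
    have hL' : LV a (n + 1) v' = LV a n (S.φ n v)
        + startOf (rkV S (n + 1)) (bmass a (n + 1)) C v' := by
      show LV a n (S.φ n v') + startOf (rkV S (n + 1)) (bmass a (n + 1))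
        (Finset.univ.filter (fun w' => S.φ n w' = S.φ n v')) v' = _
      rw [← hpar, ← hCd]
    rcases Nat.lt_or_ge (rkV S (n + 1) v) (rkV S (n + 1) v') with h | h
    · have := startOf_add_le (rkV S (n + 1)) (bmass a (n + 1)) C (rkV_inj (n + 1)) hvC hv'C hnn h
      obtain ⟨h1, h2⟩ := ht
      obtain ⟨h3, h4⟩ := ht'
      rw [hL] at h2
      rw [hL'] at h3
      linarith
    · have hlt : rkV S (n + 1) v' < rkV S (n + 1) v := by omega
      have := startOf_add_le (rkV S (n + 1)) (bmass a (n + 1)) C (rkV_inj (n + 1)) hv'C hvC hnn hlt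
      obtain ⟨h1, h2⟩ := ht
      obtain ⟨h3, h4⟩ := ht'
      rw [hL] at h1
      rw [hL'] at h4
      linarith

include haP haC in
lemma interval_in01 : ∀ (n : ℕ) (v : S.V n),
    Set.Ico (LV a n v) (LV a n v + bmass a n v) ⊆ Set.Ico (0 : ℝ) 1 := by
  intro n
  induction n with
  | zero =>
    intro v
    show Set.Ico (0:ℝ) (0 + bmass a 0 v) ⊆ _
    rw [bmass_zero haP v, zero_add]
  | succ n ih =>
    intro v t ht
    apply ih (S.φ n v)
    obtain ⟨h1, h2⟩ := child_within haP haC n v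
    exact ⟨le_trans h1 ht.1, lt_of_lt_of_le ht.2 h2⟩

/-- clamp into `[0,1)` -/
noncomputable def tcl (t : ℝ) : ℝ := if 0 ≤ t ∧ t < 1 then t else 0

lemma tcl_mem (t : ℝ) : 0 ≤ tcl t ∧ tcl t < 1 := by
  rw [tcl]
  split
  · assumption
  · norm_num

lemma tcl_of_mem {t : ℝ} (h : t ∈ Set.Ico (0:ℝ) 1) : tcl t = t := if_pos ⟨h.1, h.2⟩

include haP haC in
lemma step_ex (n : ℕ) (t : ℝ) (v : S.V n)
    (hv : LV a n v ≤ tcl t ∧ tcl t < LV a n v + bmass a n v) :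
    ∃ w : S.V (n + 1), S.φ n w = v ∧ LV a (n + 1) w ≤ tcl t ∧
      tcl t < LV a (n + 1) w + bmass a (n + 1) w := by
  set C := Finset.univ.filter (fun w' : S.V (n + 1) => S.φ n w' = v) with hCd
  have hnn : ∀ u ∈ C, 0 ≤ bmass a (n + 1) u := fun u _ => bmass_nonneg haP (n + 1) u
  have hsum : ∑ u ∈ C, bmass a (n + 1) u = bmass a n v := childSum haP haC n v
  have ht0 : 0 ≤ tcl t - LV a n v := by linarith [hv.1]
  have ht1 : tcl t - LV a n v < ∑ u ∈ C, bmass a (n + 1) u := by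
    rw [hsum]; linarith [hv.2]
  obtain ⟨w, hwC, h1, h2⟩ := tile_exists (rkV S (n + 1)) (bmass a (n + 1)) C
    (rkV_inj (n + 1)) hnn ht0 ht1
  have hφ : S.φ n w = v := (Finset.mem_filter.1 hwC).2
  refine ⟨w, hφ, ?_, ?_⟩
  · have hL : LV a (n + 1) w = LV a n v + startOf (rkV S (n + 1)) (bmass a (n + 1)) C w := by
      show LV a n (S.φ n w) + startOf (rkV S (n + 1)) (bmass a (n + 1))
        (Finset.univ.filter (fun w' => S.φ n w' = S.φ n w)) w = _
      rw [hφ]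
    rw [hL]; linarith
  · have hL : LV a (n + 1) w = LV a n v + startOf (rkV S (n + 1)) (bmass a (n + 1)) C w := by
      show LV a n (S.φ n w) + startOf (rkV S (n + 1)) (bmass a (n + 1))
        (Finset.univ.filter (fun w' => S.φ n w' = S.φ n w)) w = _
      rw [hφ]
    rw [hL]; linarith

/-- the address of a point of `[0,1)`, level by level -/
noncomputable def vAux (haP : ∀ n, MemP (S.G n) (a n))
    (haC : ∀ n, a n = pushVec (S.φ n) (a (n + 1))) :
    ∀ n, (t : ℝ) → {v : S.V n // LV a n v ≤ tcl t ∧ tcl t < LV a n v + bmass a n v}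
  | 0 => fun t => ⟨Classical.choice (nonempty_V0 haP), by
      constructor
      · show (0:ℝ) ≤ tcl t
        exact (tcl_mem t).1
      · show tcl t < 0 + bmass a 0 _
        rw [bmass_zero haP, zero_add]
        exact (tcl_mem t).2⟩
  | n + 1 => fun t =>
      ⟨(step_ex haP haC n t (vAux haP haC n t).1 (vAux haP haC n t).2).choose,
        (step_ex haP haC n t (vAux haP haC n t).1 (vAux haP haC n t).2).choose_spec.2⟩

include haP haC in
lemma vAux_compat (n : ℕ) (t : ℝ) :
    S.φ n (vAux haP haC (n + 1) t).1 = (vAux haP haC n t).1 := by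
  show S.φ n (step_ex haP haC n t (vAux haP haC n t).1 (vAux haP haC n t).2).choose
    = (vAux haP haC n t).1
  exact (step_ex haP haC n t (vAux haP haC n t).1 (vAux haP haC n t).2).choose_spec.1

/-- the coding map `[0,1) → X` -/
noncomputable def gmap (haP : ∀ n, MemP (S.G n) (a n))
    (haC : ∀ n, a n = pushVec (S.φ n) (a (n + 1))) (t : ℝ) : S.X :=
  ⟨fun n => (vAux haP haC n t).1, fun n => vAux_compat haP haC n t⟩

include haP haC in
lemma gmap_preim (n : ℕ) (v : S.V n) :
    gmap haP haC ⁻¹' (S.USet v)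
      = {t | tcl t ∈ Set.Ico (LV a n v) (LV a n v + bmass a n v)} := by
  ext t
  simp only [Set.mem_preimage, Set.mem_setOf_eq]
  constructor
  · intro h
    have : (vAux haP haC n t).1 = v := h
    rw [← this]
    exact ⟨(vAux haP haC n t).2.1, (vAux haP haC n t).2.2⟩
  · intro h
    show (vAux haP haC n t).1 = v
    exact level_disj haP haC n _ v (tcl t)
      ⟨(vAux haP haC n t).2.1, (vAux haP haC n t).2.2⟩ h

lemma measurable_tcl : Measurable tcl := by
  have : tcl = fun t => if t ∈ Set.Ico (0:ℝ) 1 then t else 0 := by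
    funext t
    rw [tcl]
    congr 1
  rw [this]
  exact Measurable.ite measurableSet_Ico measurable_id measurable_const

include haP haC in
lemma measurable_gmap : Measurable (gmap haP haC) := by
  have key : @Measurable ℝ S.X _ (.generateFrom (cylSets S)) (gmap haP haC) := by
    apply measurable_generateFrom
    rintro U ⟨n, v, rfl⟩
    rw [gmap_preim haP haC n v]
    exact measurable_tcl measurableSet_Ico
  have hinst : CoverSystem.instMeasurableSpaceX S = .generateFrom (cylSets S) := inst_eq_cyl
  intro s hs
  rw [hinst] at hs
  exact key hs

/-- the measure coded by the flow family -/
noncomputable def muFlow (haP : ∀ n, MemP (S.G n) (a n))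
    (haC : ∀ n, a n = pushVec (S.φ n) (a (n + 1))) : Measure S.X :=
  (MeasureTheory.volume.restrict (Set.Ico (0:ℝ) 1)).map (gmap haP haC)

include haP haC in
lemma muFlow_USet (n : ℕ) (v : S.V n) :
    muFlow haP haC (S.USet v) = ENNReal.ofReal (bmass a n v) := by
  rw [muFlow, Measure.map_apply (measurable_gmap haP haC) (measurableSet_USet v)]
  rw [Measure.restrict_apply' measurableSet_Ico]
  have hpre : gmap haP haC ⁻¹' (S.USet v) ∩ Set.Ico (0:ℝ) 1
      = Set.Ico (LV a n v) (LV a n v + bmass a n v) := by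
    rw [gmap_preim haP haC n v]
    ext t
    simp only [Set.mem_inter_iff, Set.mem_setOf_eq]
    constructor
    · rintro ⟨h1, h2⟩
      rwa [tcl_of_mem h2] at h1
    · intro h
      have h2 : t ∈ Set.Ico (0:ℝ) 1 := interval_in01 haP haC n v h
      rw [tcl_of_mem h2]
      exact ⟨h, h2⟩
  rw [hpre, Real.volume_Ico]
  congr 1
  ring

include haP haC in
lemma muFlow_isProb : IsProbabilityMeasure (muFlow haP haC) := by
  constructor
  rw [muFlow, Measure.map_apply (measurable_gmap haP haC) MeasurableSet.univ]
  rw [Set.preimage_univ, Measure.restrict_apply' measurableSet_Ico, Set.univ_inter,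
    Real.volume_Ico]
  norm_num

end FlowFamily
end UEProof
namespace UEProof
open Set MeasureTheory
open scoped Classical

variable {S : CoverSystem} {f : S.X → S.X}
variable {a : ∀ n, S.V n × S.V n → ℝ}
  (haP : ∀ n, MemP (S.G n) (a n))
  (haC : ∀ n, a n = pushVec (S.φ n) (a (n + 1)))

include haP haC in
lemma psi_fiber_sum (n : ℕ) (v : S.V n) :
    ∑ u' ∈ Finset.univ.filter (fun u' : S.V (n + 1) => psi S n u' = v), bmass a (n + 1) u'
      = bmass a n v := by
  have step1 : ∑ u' ∈ Finset.univ.filter (fun u' : S.V (n + 1) => psi S n u' = v),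
      bmass a (n + 1) u'
      = ∑ e' ∈ Finset.univ.filter (fun e' : S.V (n+1) × S.V (n+1) => psi S n e'.1 = v),
        a (n + 1) e' := (sum_ite_prod_fst (psi S n) (a (n + 1)) v).symm
  have step2 : ∑ e' ∈ Finset.univ.filter (fun e' : S.V (n+1) × S.V (n+1) => psi S n e'.1 = v),
        a (n + 1) e'
      = ∑ e' ∈ Finset.univ.filter (fun e' : S.V (n+1) × S.V (n+1) => S.φ n e'.2 = v),
        a (n + 1) e' := by
    rw [Finset.sum_filter, Finset.sum_filter]
    apply Finset.sum_congr rfl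
    intro e' _
    by_cases hz : a (n + 1) e' = 0
    · rw [hz]; simp
    · have he' : e' ∈ (S.G (n + 1)).E := by
        by_contra h
        exact hz ((haP (n + 1)).1.1.2 e' h)
      have hψ : S.φ n e'.2 = psi S n e'.1 := psi_spec (by rwa [Prod.mk.eta])
      rw [hψ]
  have step3 : ∑ e' ∈ Finset.univ.filter (fun e' : S.V (n+1) × S.V (n+1) => S.φ n e'.2 = v),
        a (n + 1) e'
      = ∑ w ∈ Finset.univ.filter (fun w : S.V (n + 1) => S.φ n w = v),
          ∑ u, a (n + 1) (u, w) := sum_ite_prod_snd (S.φ n) (a (n + 1)) v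
  have step4 : ∑ w ∈ Finset.univ.filter (fun w : S.V (n + 1) => S.φ n w = v),
          ∑ u, a (n + 1) (u, w)
      = ∑ w ∈ Finset.univ.filter (fun w : S.V (n + 1) => S.φ n w = v), bmass a (n + 1) w :=
    Finset.sum_congr rfl (fun w _ => (haP (n + 1)).1.2 w)
  rw [step1, step2, step3, step4, childSum haP haC n v]

lemma USet_disjoint {n : ℕ} {v v' : S.V n} (h : v ≠ v') :
    Disjoint (S.USet v) (S.USet v') := by
  rw [Set.disjoint_left]
  intro x hx hx'
  have h1 : S.proj x n = v := hx
  have h2 : S.proj x n = v' := hx'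
  exact h (h1.symm.trans h2)

lemma preim_f_USet (hf : S.IsLimitMap f) (n : ℕ) (v : S.V n) :
    f ⁻¹' (S.USet v)
      = ⋃ u' ∈ Finset.univ.filter (fun u' : S.V (n + 1) => psi S n u' = v), S.USet u' := by
  ext x
  simp only [Set.mem_preimage, Set.mem_iUnion, Finset.mem_filter, Finset.mem_univ, true_and]
  constructor
  · intro hx
    refine ⟨S.proj x (n + 1), ?_, rfl⟩
    rw [← proj_f hf x n]
    exact hx
  · rintro ⟨u', hu', hx⟩
    show S.proj (f x) n = v
    rw [proj_f hf x n]
    have : S.proj x (n + 1) = u' := hx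
    rw [this]
    exact hu'

include haP haC in
lemma muFlow_invariant (hf : S.IsLimitMap f) : S.Invariant f (muFlow haP haC) := by
  haveI := muFlow_isProb haP haC
  haveI : IsProbabilityMeasure ((muFlow haP haC).map f) :=
    Measure.isProbabilityMeasure_map (measurable_f hf).aemeasurable
  have hmap : (muFlow haP haC).map f = muFlow haP haC := by
    apply measure_ext_cyl
    intro n v
    rw [Measure.map_apply (measurable_f hf) (measurableSet_USet v)]
    rw [preim_f_USet hf n v]
    rw [measure_biUnion_finset
      (fun u _ u' _ h => USet_disjoint h)
      (fun u _ => measurableSet_USet u)]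
    rw [Finset.sum_congr rfl (fun u' _ => muFlow_USet haP haC (n + 1) u')]
    rw [← ENNReal.ofReal_sum_of_nonneg (fun u' _ => bmass_nonneg haP (n + 1) u')]
    rw [psi_fiber_sum haP haC n v, muFlow_USet haP haC n v]
  intro B hB
  conv_rhs => rw [← hmap]
  rw [Measure.map_apply (measurable_f hf) hB]

end UEProof
/-- If the winding matrices of a system of circuits
expressing all invariant measures have entries bounded below by `ε_n` with
`Π (1 - d_n ε_n) = 0`, then the inverse limit is uniquely ergodic. -/
theorem unique_ergodicity_from_winding_matrices (S : CoverSystem)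
    (f : S.X → S.X) (hf : S.IsLimitMap f)
    (d : ℕ → ℕ) (c : ∀ n, Fin (d n) → Set (S.V n × S.V n))
    (hcmem : ∀ (n : ℕ) (i : Fin (d n)), c n i ∈ circuitsOf (S.G n))
    (hcinj : ∀ n, Function.Injective (c n))
    (hCall : ∀ μ : MeasureTheory.Measure S.X, MeasureTheory.IsProbabilityMeasure μ →
      S.Invariant f μ →
      ∀ n : ℕ, ∃ st : Fin (d n) → ℝ, (∀ i, 0 ≤ st i) ∧
        ∀ e, S.muVec f μ n e = ∑ i, st i * circTilde (c n i) e)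
    (M : ∀ n, Fin (d (n + 1)) → Fin (d n) → ℕ)
    (hM : ∀ (n : ℕ) (i : Fin (d (n + 1))),
      pushVec (S.φ n) (circVec (c (n + 1) i)) =
        fun e => ∑ j, (M n i j : ℝ) * circVec (c n j) e)
    (ε : ℕ → ℝ) (hε : ∀ n, 0 < ε n)
    (hεM : ∀ (n : ℕ) (i : Fin (d (n + 1))) (j : Fin (d n)),
      ε n ≤ (((c n j).ncard : ℝ) / ((c (n + 1) i).ncard : ℝ)) * (M n i j : ℝ))
    (hprod : ∀ n : ℕ, Filter.Tendsto
      (fun K : ℕ => ∏ i ∈ Finset.Ico n K, (1 - (d i : ℝ) * ε i))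
      Filter.atTop (nhds 0)) :
    ∃! μ : MeasureTheory.Measure S.X,
      MeasureTheory.IsProbabilityMeasure μ ∧ S.Invariant f μ := by
  classical
  -- arbitrarily high levels with circuits
  have hd' : ∀ k : ℕ, ∃ m, k ≤ m ∧ 0 < d m := by
    intro k
    by_contra h
    push_neg at h
    have hone : ∀ K, (∏ i ∈ Finset.Ico k K, (1 - (d i : ℝ) * ε i)) = 1 := by
      intro K
      apply Finset.prod_eq_one
      intro i hi
      have h2 := h i (Finset.mem_Ico.1 hi).1
      have : d i = 0 := by omega
      rw [this]
      simp
    have h1 := hprod k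
    rw [show (fun K => ∏ i ∈ Finset.Ico k K, (1 - (d i : ℝ) * ε i)) = fun _ => (1:ℝ) from
      funext hone] at h1
    exact one_ne_zero (tendsto_nhds_unique tendsto_const_nhds h1)
  -- a compatible flow family and the invariant measure it codes
  obtain ⟨a, haP, haC⟩ := UEProof.exists_flow_family hcmem hd'
  haveI hprob0 : MeasureTheory.IsProbabilityMeasure (UEProof.muFlow haP haC) :=
    UEProof.muFlow_isProb haP haC
  have hinv0 : S.Invariant f (UEProof.muFlow haP haC) := UEProof.muFlow_invariant haP haC hf
  -- all levels carry circuits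
  have hd : ∀ n, 0 < d n := by
    intro n
    by_contra h
    have hdn : d n = 0 := by omega
    obtain ⟨st, -, hst⟩ := hCall (UEProof.muFlow haP haC) hprob0 hinv0 n
    haveI hempty : IsEmpty (Fin (d n)) := ⟨fun i => by have := i.isLt; omega⟩
    have hz : ∀ e, S.muVec f (UEProof.muFlow haP haC) n e = 0 := by
      intro e
      rw [hst e, Finset.univ_eq_empty, Finset.sum_empty]
    have htot := UEProof.muVec_total hf (UEProof.muFlow haP haC) n
    rw [Finset.sum_congr rfl (fun e _ => hz e)] at htot
    simp at htot
  refine ⟨UEProof.muFlow haP haC, ⟨hprob0, hinv0⟩, ?_⟩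
  rintro ν ⟨hνp, hνi⟩
  haveI := hνp
  exact UEProof.eq_of_muVec_eq hf (fun n =>
    UEProof.muVec_unique hf hcmem hM hε hεM hprod hd ν (UEProof.muFlow haP haC)
      (fun m => hCall ν hνp hνi m)
      (fun m => hCall (UEProof.muFlow haP haC) hprob0 hinv0 m) n)
end
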